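/- arXiv:2508.18140 — 6 statements merged into one kernel-verified Lean document; each statement's English description precedes it below -/
import Mathlib

section
/- For every T > 0 there exists a constant C = C(T) > 0 with the following property. Let B = (B_s)_{s≥0} be a standard real Brownian motion on a probability space (with B_0 = 0, continuous paths, and independent increments B_t − B_s distributed as a centered Gaussian of variance t − s). Let h̄ : ℝ → ℝ be bounded continuous with h̄(y) ≥ 0 for all y ∈ [−1, 1], and let ξ : [0,T] × ℝ → ℝ be bounded continuous. Then for all t ∈ (0, T] and x ∈ ℝ: log E[ exp( h̄(x + B_t) + ∫_0^t ξ(t − s, x + B_s) ds ) ] ≥ −∫_0^t sup_{y∈ℝ} |ξ(s, y)| ds − C·(1 + 1_{|x|>1}·x²/t). -/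
open MeasureTheory ProbabilityTheory Real


lemma gauss_icc_lb {t : ℝ} (ht : 0 < t) (u L m : ℝ) (hL : 0 ≤ L)
    (h1 : |u| ≤ m) (h2 : |u + L| ≤ m) :
    L * (Real.sqrt (2 * π * t))⁻¹ * Real.exp (-m ^ 2 / (2 * t)) ≤
      ((gaussianReal 0 t.toNNReal) (Set.Icc u (u + L))).toReal := by
  have hv : t.toNNReal ≠ 0 := by
    simp [Real.toNNReal_pos.mpr ht, ne_of_gt]
  have hvt : ((t.toNNReal : ℝ)) = t := Real.coe_toNNReal t ht.le
  rw [gaussianReal_apply_eq_integral 0 hv, ENNReal.toReal_ofReal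
    (integral_nonneg fun y => gaussianPDFReal_nonneg _ _ _)]
  have hconst : ∀ y ∈ Set.Icc u (u + L),
      (Real.sqrt (2 * π * t))⁻¹ * Real.exp (-m ^ 2 / (2 * t))
        ≤ gaussianPDFReal 0 t.toNNReal y := by
    intro y hy
    rw [gaussianPDFReal, hvt]
    have hy2 : y ^ 2 ≤ m ^ 2 := by
      have hym : |y| ≤ m := by
        rw [abs_le] at h1 h2 ⊢
        exact ⟨by linarith [hy.1], by linarith [hy.2]⟩
      nlinarith [abs_nonneg y, sq_abs y]
    have hdiv : -m ^ 2 / (2 * t) ≤ -(y - 0) ^ 2 / (2 * t) := by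
      apply div_le_div_of_nonneg_right ?_ (by linarith)
      nlinarith
    exact mul_le_mul_of_nonneg_left (Real.exp_le_exp.mpr hdiv)
      (inv_nonneg.mpr (Real.sqrt_nonneg _))
  have hmono := setIntegral_mono_on
    (integrableOn_const measure_Icc_lt_top.ne)
    ((integrable_gaussianPDFReal 0 t.toNNReal).integrableOn)
    measurableSet_Icc hconst
  calc L * (Real.sqrt (2 * π * t))⁻¹ * Real.exp (-m ^ 2 / (2 * t))
      = ∫ _ in Set.Icc u (u + L), (Real.sqrt (2 * π * t))⁻¹ * Real.exp (-m ^ 2 / (2 * t)) := by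
        rw [setIntegral_const, measureReal_def, Real.volume_Icc, show u + L - u = L by ring,
          ENNReal.toReal_ofReal hL, smul_eq_mul]; ring
    _ ≤ _ := hmono


lemma kpz_lb_compare (T t c : ℝ) (ht : 0 < t) (htT : t ≤ T) :
    Real.exp (-c ^ 2 / t - 1) * (Real.sqrt (2 * π * max T 1))⁻¹ ≤
      (min 1 (Real.sqrt t)) * (Real.sqrt (2 * π * t))⁻¹ *
        Real.exp (-(|c| + min 1 (Real.sqrt t)) ^ 2 / (2 * t)) := by
  set L := min 1 (Real.sqrt t) with hLdef
  have hL : 0 ≤ L := le_min zero_le_one (Real.sqrt_nonneg t)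
  have hL2 : L ^ 2 ≤ t := by
    have : L ≤ Real.sqrt t := min_le_right _ _
    nlinarith [Real.sq_sqrt ht.le, Real.sqrt_nonneg t]
  have hexp : Real.exp (-c ^ 2 / t - 1) ≤ Real.exp (-(|c| + L) ^ 2 / (2 * t)) := by
    apply Real.exp_le_exp.mpr
    have e1 : -c ^ 2 / t - 1 = (-(2 * c ^ 2) - 2 * t) / (2 * t) := by field_simp
    rw [e1]
    apply div_le_div_of_nonneg_right ?_ (by linarith)
    nlinarith [sq_nonneg (|c| - L), sq_abs c]
  have hA : (0:ℝ) < Real.sqrt (2 * π * max T 1) := Real.sqrt_pos.mpr (by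
    have := Real.pi_pos
    have : (0:ℝ) < max T 1 := lt_max_of_lt_right one_pos
    positivity)
  have h2πt : (0:ℝ) < Real.sqrt (2 * π * t) := Real.sqrt_pos.mpr (by
    have := Real.pi_pos; positivity)
  have hmono : Monotone Real.sqrt := fun a b h => Real.sqrt_le_sqrt h
  have hLs : L = Real.sqrt (min 1 t) := by
    rw [hmono.map_min, Real.sqrt_one]
  have hs : Real.sqrt (2 * π * t) ≤ L * Real.sqrt (2 * π * max T 1) := by
    rw [hLs, ← Real.sqrt_mul (le_min zero_le_one ht.le)]
    apply Real.sqrt_le_sqrt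
    rcases le_total t 1 with h | h
    · rw [min_eq_right h]
      nlinarith [mul_nonneg (mul_nonneg (by norm_num : (0:ℝ) ≤ 2) Real.pi_pos.le) ht.le,
        le_max_right T 1]
    · rw [min_eq_left h]
      nlinarith [mul_nonneg (by norm_num : (0:ℝ) ≤ 2) Real.pi_pos.le, le_max_left T 1]
  have hinv : (Real.sqrt (2 * π * max T 1))⁻¹ ≤ L * (Real.sqrt (2 * π * t))⁻¹ := by
    rw [inv_eq_one_div, ← div_eq_mul_inv, div_le_div_iff₀ hA h2πt]
    linarith
  calc Real.exp (-c ^ 2 / t - 1) * (Real.sqrt (2 * π * max T 1))⁻¹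
      ≤ Real.exp (-(|c| + L) ^ 2 / (2 * t)) * (L * (Real.sqrt (2 * π * t))⁻¹) :=
        mul_le_mul hexp hinv (by positivity) (Real.exp_pos _).le
    _ = L * (Real.sqrt (2 * π * t))⁻¹ * Real.exp (-(|c| + L) ^ 2 / (2 * t)) := by ring


/-- **Coming up from −∞ for the smooth KPZ equation.** For every `T > 0` there is a
constant `C = C(T) > 0` such that: for every standard Brownian motion `B` (starting
at `0`, with continuous paths, Gaussian increments and independent increments), every
bounded continuous initial condition `h̄ ≥ 0` on `[−1,1]` and every bounded continuous
forcing `ξ`, the Cole–Hopf/Feynman–Kac value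
`log E[exp(h̄(x+B_t) + ∫_0^t ξ(t−s, x+B_s) ds)]` is bounded below by
`−∫_0^t sup_y |ξ(s,y)| ds − C (1 + 1_{|x|>1} x²/t)` for all `t ∈ (0,T]`, `x ∈ ℝ`. -/
theorem kpz_smooth_coming_up_from_minus_infinity (T : ℝ) (hT : 0 < T) :
    ∃ C : ℝ, 0 < C ∧
      ∀ (Ω : Type) (_ : MeasurableSpace Ω) (P : Measure Ω), IsProbabilityMeasure P →
      ∀ B : ℝ → Ω → ℝ,
        (∀ s : ℝ, Measurable (B s)) →
        (∀ ω, Continuous fun s => B s ω) →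
        (∀ ω, B 0 ω = 0) →
        (∀ s t : ℝ, 0 ≤ s → s ≤ t →
          Measure.map (fun ω => B t ω - B s ω) P = gaussianReal 0 (Real.toNNReal (t - s))) →
        (∀ (n : ℕ) (τ : ℕ → ℝ), Monotone τ → (∀ i, 0 ≤ τ i) →
          iIndepFun (m := fun _ : Fin n => (inferInstance : MeasurableSpace ℝ))
            (fun (i : Fin n) ω => B (τ (i + 1)) ω - B (τ i) ω) P) →
      ∀ hbar : ℝ → ℝ, Continuous hbar → (∃ M : ℝ, ∀ y, |hbar y| ≤ M) →
        (∀ y ∈ Set.Icc (-1 : ℝ) 1, 0 ≤ hbar y) →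
      ∀ ξ : ℝ → ℝ → ℝ, Continuous (fun p : ℝ × ℝ => ξ p.1 p.2) →
        (∃ M : ℝ, ∀ s y, |ξ s y| ≤ M) →
      ∀ t : ℝ, t ∈ Set.Ioc 0 T → ∀ x : ℝ,
        Real.log (∫ ω, Real.exp (hbar (x + B t ω) +
            ∫ s in (0:ℝ)..t, ξ (t - s) (x + B s ω)) ∂P)
          ≥ -(∫ s in (0:ℝ)..t, ⨆ y : ℝ, |ξ s y|)
              - C * (1 + (if 1 < |x| then (1 : ℝ) else 0) * x ^ 2 / t) := by
  have hAx : (0:ℝ) < 2 * π * max T 1 := by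
    have := Real.pi_pos
    have h1 : (0:ℝ) < max T 1 := lt_max_of_lt_right one_pos
    positivity
  have hsqrtA : (0:ℝ) < Real.sqrt (2 * π * max T 1) := Real.sqrt_pos.mpr hAx
  have hsqrtA1 : (1:ℝ) ≤ Real.sqrt (2 * π * max T 1) := by
    have h1le : (1:ℝ) ≤ 2 * π * max T 1 := by
      nlinarith [Real.pi_gt_three, le_max_right T 1]
    have := Real.sqrt_le_sqrt h1le
    rwa [Real.sqrt_one] at this
  have hlogA : 0 ≤ Real.log (Real.sqrt (2 * π * max T 1)) := Real.log_nonneg hsqrtA1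
  refine ⟨1 + Real.log (Real.sqrt (2 * π * max T 1)), by linarith, ?_⟩
  set C := 1 + Real.log (Real.sqrt (2 * π * max T 1)) with hCdef
  have hCpos : 0 < C := by linarith
  intro Ω mΩ P hP B hBmeas hBcont hB0 hgauss _ hbar hbarc hMhbar hbar0 ξ hξc hMξ' t ht x
  obtain ⟨Mξ, hMξ⟩ := hMξ'
  have ht0 : 0 < t := ht.1
  have htT : t ≤ T := ht.2
  set g : ℝ → ℝ := fun s => ⨆ y : ℝ, |ξ s y| with hgdef
  set K : ℝ := ∫ s in (0:ℝ)..t, g s with hKdef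
  have hbdd : ∀ s, BddAbove (Set.range fun y => |ξ s y|) := by
    intro s
    refine ⟨Mξ, ?_⟩
    rintro z ⟨y, rfl⟩
    exact hMξ s y
  have hgnn : ∀ s, 0 ≤ g s := fun s =>
    le_trans (abs_nonneg (ξ s 0)) (le_ciSup (hbdd s) 0)
  have hgle : ∀ s, g s ≤ Mξ := fun s => ciSup_le fun y => hMξ s y
  have hgmeas : Measurable g := by
    have hlsc : LowerSemicontinuous g :=
      lowerSemicontinuous_ciSup hbdd fun y =>
        ((hξc.comp (continuous_id.prodMk continuous_const)).abs).lowerSemicontinuous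
    exact hlsc.measurable
  have hK0 : 0 ≤ K := intervalIntegral.integral_nonneg ht0.le fun s _ => hgnn s
  have hind : (0:ℝ) ≤ (if 1 < |x| then (1:ℝ) else 0) * x ^ 2 / t := by
    apply div_nonneg _ ht0.le
    apply mul_nonneg _ (sq_nonneg x)
    split_ifs <;> norm_num
  by_cases hInt : Integrable (fun ω => Real.exp (hbar (x + B t ω) +
      ∫ s in (0:ℝ)..t, ξ (t - s) (x + B s ω))) P
  · -- main case
    -- interval integrability of bounded measurable functions
    have hii : ∀ f : ℝ → ℝ, Measurable f → (∀ s, |f s| ≤ Mξ) →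
        IntervalIntegrable f volume 0 t := by
      intro f hf hb
      rw [intervalIntegrable_iff]
      have hfin : volume (Set.uIoc (0:ℝ) t) ≠ ⊤ := by
        rw [Set.uIoc]; exact measure_Ioc_lt_top.ne
      exact Measure.integrableOn_of_bounded hfin hf.aestronglyMeasurable
        (ae_of_all _ fun s => by rw [Real.norm_eq_abs]; exact hb s)
    have hgInt2 : IntervalIntegrable (fun s => g (t - s)) volume 0 t :=
      hii _ (hgmeas.comp (measurable_const.sub measurable_id))
        (fun s => by rw [abs_of_nonneg (hgnn _)]; exact hgle _)
    have hpath : ∀ ω, -K ≤ ∫ s in (0:ℝ)..t, ξ (t - s) (x + B s ω) := by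
      intro ω
      have hcont : Continuous fun s => ξ (t - s) (x + B s ω) :=
        hξc.comp ((continuous_const.sub continuous_id).prodMk
          (continuous_const.add (hBcont ω)))
      have h1 : ∀ s ∈ Set.Icc (0:ℝ) t, -g (t - s) ≤ ξ (t - s) (x + B s ω) := by
        intro s _
        have h0 : |ξ (t - s) (x + B s ω)| ≤ g (t - s) :=
          le_ciSup (hbdd (t - s)) (x + B s ω)
        have h2 := neg_abs_le (ξ (t - s) (x + B s ω))
        linarith
      have hgInt3 : IntervalIntegrable (fun s => -g (t - s)) volume 0 t :=
        hii _ ((hgmeas.comp (measurable_const.sub measurable_id)).neg)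
          (fun s => by rw [abs_neg, abs_of_nonneg (hgnn _)]; exact hgle _)
      have h2 := intervalIntegral.integral_mono_on ht0.le hgInt3
        (hcont.intervalIntegrable 0 t) h1
      rw [intervalIntegral.integral_neg] at h2
      have h3 : (∫ s in (0:ℝ)..t, g (t - s)) = K := by
        rw [intervalIntegral.integral_comp_sub_left g t]; simp [hKdef]
      rw [h3] at h2
      exact h2
    set A : Set Ω := B t ⁻¹' Set.Icc (-1 - x) (1 - x) with hAdef
    have hA : MeasurableSet A := hBmeas t measurableSet_Icc
    have hmap : Measure.map (B t) P = gaussianReal 0 t.toNNReal := by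
      have h := hgauss 0 t le_rfl ht0.le
      have heq : (fun ω => B t ω - B 0 ω) = B t := funext fun ω => by
        rw [hB0 ω, sub_zero]
      rw [heq] at h
      simpa using h
    have hPA : P A = gaussianReal 0 t.toNNReal (Set.Icc (-1 - x) (1 - x)) := by
      rw [← hmap, Measure.map_apply (hBmeas t) measurableSet_Icc]
    -- lower bound on (P A).toReal
    set L : ℝ := min 1 (Real.sqrt t) with hLdef
    have hL0 : 0 ≤ L := le_min zero_le_one (Real.sqrt_nonneg t)
    have hL1 : L ≤ 1 := min_le_left _ _
    set c : ℝ := max (-1 - x) (min (1 - x) 0) with hcdef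
    have hc1 : -1 - x ≤ c := le_max_left _ _
    have hc2 : c ≤ 1 - x := max_le (by linarith) (le_trans (min_le_left _ _) le_rfl)
    have hglb : L * (Real.sqrt (2 * π * t))⁻¹ * Real.exp (-(|c| + L) ^ 2 / (2 * t))
        ≤ (P A).toReal := by
      by_cases hcase : c + L ≤ 1 - x
      · have hsub : Set.Icc c (c + L) ⊆ Set.Icc (-1 - x) (1 - x) :=
          Set.Icc_subset_Icc hc1 hcase
        have hg := gauss_icc_lb ht0 c L (|c| + L) hL0 (by linarith)
          ((abs_add_le c L).trans (by rw [abs_of_nonneg hL0]))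
        refine hg.trans ?_
        rw [hPA]
        exact ENNReal.toReal_le_toReal (measure_ne_top _ _) (measure_ne_top _ _)
          |>.mpr (measure_mono hsub)
      · have hlow : -1 - x ≤ c - L := by
          push_neg at hcase
          linarith
        have hsub : Set.Icc (c - L) (c - L + L) ⊆ Set.Icc (-1 - x) (1 - x) := by
          rw [show c - L + L = c by ring]
          exact Set.Icc_subset_Icc hlow hc2
        have hg := gauss_icc_lb ht0 (c - L) L (|c| + L) hL0
          ((abs_sub c L).trans (by rw [abs_of_nonneg hL0]))
          (by rw [show c - L + L = c by ring]; linarith)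
        refine hg.trans ?_
        rw [hPA]
        exact ENNReal.toReal_le_toReal (measure_ne_top _ _) (measure_ne_top _ _)
          |>.mpr (measure_mono hsub)
    have hcomp : Real.exp (-c ^ 2 / t - 1) * (Real.sqrt (2 * π * max T 1))⁻¹
        ≤ (P A).toReal := (kpz_lb_compare T t c ht0 htT).trans hglb
    have hPApos : 0 < (P A).toReal := lt_of_lt_of_le (by positivity) hcomp
    -- integral lower bound
    have hIndInt : Integrable (A.indicator fun _ => Real.exp (-K)) P :=
      (integrable_const _).indicator hA
    have hle : ∀ ω, A.indicator (fun _ => Real.exp (-K)) ω ≤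
        Real.exp (hbar (x + B t ω) + ∫ s in (0:ℝ)..t, ξ (t - s) (x + B s ω)) := by
      intro ω
      by_cases hω : ω ∈ A
      · rw [Set.indicator_of_mem hω]
        apply Real.exp_le_exp.mpr
        have hmem : B t ω ∈ Set.Icc (-1 - x) (1 - x) := hω
        have hb : 0 ≤ hbar (x + B t ω) :=
          hbar0 _ ⟨by linarith [hmem.1], by linarith [hmem.2]⟩
        linarith [hpath ω]
      · rw [Set.indicator_of_notMem hω]
        positivity
    have hge := integral_mono hIndInt hInt hle
    rw [integral_indicator_const _ hA, smul_eq_mul, measureReal_def] at hge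
    have hlogmono := Real.log_le_log (by positivity) hge
    rw [Real.log_mul (ne_of_gt hPApos) (Real.exp_ne_zero _), Real.log_exp] at hlogmono
    have hlogPA : -c ^ 2 / t - 1 - Real.log (Real.sqrt (2 * π * max T 1))
        ≤ Real.log (P A).toReal := by
      have h1 := Real.log_le_log (by positivity) hcomp
      rw [Real.log_mul (Real.exp_ne_zero _) (by positivity), Real.log_exp,
        Real.log_inv] at h1
      linarith
    have hcx : c ^ 2 ≤ (if 1 < |x| then (1:ℝ) else 0) * x ^ 2 := by
      split_ifs with hx
      · rcases lt_abs.mp hx with h | h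
        · have hmin : min (1 - x) 0 = 1 - x := min_eq_left (by linarith)
          have hcval : c = 1 - x := by rw [hcdef, hmin, max_eq_right (by linarith)]
          nlinarith
        · have hmin : min (1 - x) 0 = 0 := min_eq_right (by linarith)
          have hcval : c = -1 - x := by rw [hcdef, hmin, max_eq_left (by linarith)]
          nlinarith
      · have hx' := abs_le.mp (not_lt.mp hx)
        have hcval : c = 0 := by
          rw [hcdef, min_eq_right (by linarith [hx'.2]), max_eq_right (by linarith [hx'.1])]
        simp [hcval]
    have hdiv : c ^ 2 / t ≤ (if 1 < |x| then (1:ℝ) else 0) * x ^ 2 / t :=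
      (div_le_div_iff_of_pos_right ht0).mpr hcx
    rw [ge_iff_le]
    have hfin : (if 1 < |x| then (1:ℝ) else 0) * x ^ 2 / t ≤
        C * ((if 1 < |x| then (1:ℝ) else 0) * x ^ 2 / t) :=
      le_mul_of_one_le_left hind (by linarith)
    rw [neg_div] at hlogPA
    refine le_trans ?_ hlogmono
    linarith [hlogPA, hdiv, hfin, hCdef]
  · rw [integral_undef hInt, Real.log_zero]
    have h1 : 0 ≤ C * (1 + (if 1 < |x| then (1:ℝ) else 0) * x ^ 2 / t) :=
      mul_nonneg hCpos.le (by linarith)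
    rw [ge_iff_le]
    linarith
end

section
/- For every s > 0 and y ∈ ℝ, the periodic heat kernel satisfies the two-sided bound √(2π/s) · exp( −|y|_𝕋² / (2s) ) ≤ p_𝕋(s, y) ≤ 2·(1 + √(2π/s)) · exp( −|y|_𝕋² / (2s) ). -/
open Real Set

/-- The periodic heat kernel `p_𝕋(s,y) = 2π ∑_{k∈ℤ} (2πs)^{−1/2} exp(−(y+2πk)²/(2s))`. -/
noncomputable def heatKernelTorus (s y : ℝ) : ℝ :=
  2 * π * ∑' k : ℤ, (Real.sqrt (2 * π * s))⁻¹ * Real.exp (-(y + 2 * π * k) ^ 2 / (2 * s))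

/-- The distance to `0` on the torus of circumference `2π`: `|y|_𝕋 = inf_{k∈ℤ} |y − 2πk|`. -/
noncomputable def torusAbs (y : ℝ) : ℝ := ⨅ k : ℤ, |y - 2 * π * k|


lemma hk_summable_gauss_nat {b : ℝ} (hb : 0 < b) :
    Summable (fun n : ℕ => Real.exp (-(b * (n : ℝ) ^ 2))) := by
  refine Summable.of_nonneg_of_le (f := fun n : ℕ => Real.exp (-b) ^ n)
    (fun n => (Real.exp_pos _).le) ?_ ?_
  · intro n
    show Real.exp (-(b * (n:ℝ)^2)) ≤ Real.exp (-b) ^ n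
    rw [← Real.exp_nat_mul]
    apply Real.exp_le_exp.mpr
    have h : (n : ℝ) ≤ (n : ℝ) ^ 2 := by
      have := Nat.le_self_pow (two_ne_zero) n
      exact_mod_cast this
    nlinarith [mul_le_mul_of_nonneg_left h hb.le]
  · exact summable_geometric_of_lt_one (Real.exp_pos _).le
      (Real.exp_lt_one_iff.mpr (by linarith))

lemma hk_tail_le {b : ℝ} (hb : 0 < b) :
    ∑' n : ℕ, Real.exp (-(b * ((n : ℝ) + 1) ^ 2)) ≤ Real.sqrt (π / b) / 2 := by
  have hanti : ∀ N : ℕ, AntitoneOn (fun x : ℝ => Real.exp (-b * x ^ 2)) (Icc (0:ℝ) (0 + N)) := by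
    intro N x hx y hy hxy
    apply Real.exp_le_exp.mpr
    nlinarith [hx.1, hy.1, hb, mul_le_mul hxy hxy hx.1 (hx.1.trans hxy)]
  apply Real.tsum_le_of_sum_range_le (fun n => (Real.exp_pos _).le)
  intro N
  have key := (hanti N).sum_le_integral
  have h1 : ∑ i ∈ Finset.range N, Real.exp (-(b * ((i : ℝ) + 1) ^ 2))
      ≤ ∫ x in (0:ℝ)..(0 + N : ℝ), Real.exp (-b * x ^ 2) := by
    refine le_trans (le_of_eq ?_) key
    apply Finset.sum_congr rfl
    intro i _
    push_cast
    ring_nf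
  refine h1.trans ?_
  rw [zero_add, intervalIntegral.integral_of_le (by positivity)]
  rw [← integral_gaussian_Ioi b]
  apply MeasureTheory.setIntegral_mono_set
    ((integrable_exp_neg_mul_sq hb).integrableOn)
    (Filter.Eventually.of_forall (fun x => (Real.exp_pos _).le))
    (HasSubset.Subset.eventuallyLE Ioc_subset_Ioi_self)

lemma hk_main (s : ℝ) (hs : 0 < s) (z : ℝ) (h0 : 0 ≤ z) (h1 : z ≤ π) :
    Summable (fun k : ℤ => Real.exp (-(z + 2*π*k)^2 / (2*s))) ∧
    ∑' k : ℤ, Real.exp (-(z + 2*π*k)^2 / (2*s)) ≤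
      (2 + Real.sqrt (s / (2*π))) * Real.exp (-z^2 / (2*s)) := by
  have hπ := Real.pi_pos
  set E : ℝ := Real.exp (-z^2/(2*s)) with hE
  set b : ℝ := 2*π^2/s with hb
  have hbpos : 0 < b := by positivity
  set g : ℤ → ℝ := fun k =>
    E * Real.exp (-(b * (if 0 ≤ k then (k:ℝ) else (-(k:ℝ)-1))^2)) with hg
  have hfg : ∀ k : ℤ, Real.exp (-(z + 2*π*k)^2 / (2*s)) ≤ g k := by
    intro k
    simp only [hg, hE]
    rw [← Real.exp_add]
    apply Real.exp_le_exp.mpr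
    split_ifs with hk
    · have hk' : (0:ℝ) ≤ (k:ℝ) := by exact_mod_cast hk
      have heq : -z^2/(2*s) + -(b * ((k:ℝ))^2) = -(z^2 + 4*π^2*(k:ℝ)^2)/(2*s) := by
        rw [hb]; field_simp; ring
      rw [heq]
      gcongr
      nlinarith [mul_nonneg (mul_nonneg hπ.le hk') h0]
    · have hk' : (k:ℝ) ≤ -1 := by
        have : k ≤ -1 := by omega
        exact_mod_cast this
      have heq : -z^2/(2*s) + -(b * (-(k:ℝ)-1)^2) = -(z^2 + 4*π^2*(-(k:ℝ)-1)^2)/(2*s) := by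
        rw [hb]; field_simp; ring
      rw [heq]
      gcongr
      nlinarith [mul_nonneg (by linarith : (0:ℝ) ≤ -(k:ℝ)-1) (by linarith : (0:ℝ) ≤ 2*π - z), hπ]
  have hgnat : (fun n : ℕ => g (n : ℤ)) = fun n : ℕ => E * Real.exp (-(b * (n:ℝ)^2)) := by
    funext n
    simp only [hg]
    rw [if_pos (Int.natCast_nonneg n)]
    norm_num
  have hgneg : (fun n : ℕ => g (-((n : ℤ) + 1))) = fun n : ℕ => E * Real.exp (-(b * (n:ℝ)^2)) := by
    funext n
    simp only [hg]
    rw [if_neg (by omega)]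
    push_cast
    ring_nf
  have hU : Summable (fun n : ℕ => Real.exp (-(b * (n:ℝ)^2))) := hk_summable_gauss_nat hbpos
  have hg1 : Summable (fun n : ℕ => g (n : ℤ)) := by rw [hgnat]; exact hU.mul_left E
  have hg2 : Summable (fun n : ℕ => g (-((n : ℤ) + 1))) := by rw [hgneg]; exact hU.mul_left E
  have hgsum : Summable g := Summable.of_nat_of_neg_add_one hg1 hg2
  have hfsum : Summable (fun k : ℤ => Real.exp (-(z + 2*π*k)^2 / (2*s))) := by
    apply Summable.of_norm_bounded hgsum
    intro k
    rw [Real.norm_eq_abs, abs_of_nonneg (Real.exp_pos _).le]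
    exact hfg k
  refine ⟨hfsum, ?_⟩
  have hUval : ∑' n : ℕ, Real.exp (-(b * (n:ℝ)^2)) ≤ 1 + Real.sqrt (s/(2*π)) / 2 := by
    have hπb : π / b = s / (2*π) := by rw [hb]; field_simp
    have h2 := hk_tail_le hbpos
    rw [hπb] at h2
    rw [Summable.tsum_eq_zero_add hU]
    push_cast
    norm_num
    linarith [h2]
  calc ∑' k : ℤ, Real.exp (-(z + 2*π*k)^2 / (2*s))
      ≤ ∑' k : ℤ, g k := Summable.tsum_le_tsum hfg hfsum hgsum
    _ = (∑' n : ℕ, g (n:ℤ)) + ∑' n : ℕ, g (-((n:ℤ)+1)) := tsum_of_nat_of_neg_add_one hg1 hg2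
    _ = 2 * E * ∑' n : ℕ, Real.exp (-(b * (n:ℝ)^2)) := by
        rw [hgnat, hgneg, tsum_mul_left]; ring
    _ ≤ 2 * E * (1 + Real.sqrt (s/(2*π)) / 2) := by
        apply mul_le_mul_of_nonneg_left hUval (by positivity)
    _ = (2 + Real.sqrt (s/(2*π))) * E := by ring

/-- **Two-sided bounds for the periodic heat kernel:** for all `s > 0` and `y ∈ ℝ`,
`√(2π/s) exp(−|y|_𝕋²/(2s)) ≤ p_𝕋(s,y) ≤ 2 (1 + √(2π/s)) exp(−|y|_𝕋²/(2s))`. -/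
theorem heatKernelTorus_two_sided_bounds (s : ℝ) (hs : 0 < s) (y : ℝ) :
    Real.sqrt (2 * π / s) * Real.exp (-(torusAbs y) ^ 2 / (2 * s)) ≤ heatKernelTorus s y ∧
      heatKernelTorus s y ≤
        2 * (1 + Real.sqrt (2 * π / s)) * Real.exp (-(torusAbs y) ^ 2 / (2 * s)) := by
  have hπ := Real.pi_pos
  set k₀ : ℤ := round (y / (2*π)) with hk₀
  set z' : ℝ := y - 2*π*k₀ with hz'
  set a : ℝ := |z'| with ha
  have ha0 : 0 ≤ a := abs_nonneg _
  have haπ : a ≤ π := by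
    have h := abs_sub_round (y / (2*π))
    have hz2 : z' = 2*π*(y/(2*π) - (k₀ : ℝ)) := by rw [hz']; field_simp
    rw [ha, hz2, abs_mul, abs_of_pos (by positivity : (0:ℝ) < 2*π)]
    rw [hk₀]
    nlinarith [h]
  have htor : torusAbs y = a := by
    apply le_antisymm
    · have hb : BddBelow (Set.range fun k : ℤ => |y - 2*π*k|) := by
        refine ⟨0, ?_⟩
        rintro t ⟨k, rfl⟩
        exact abs_nonneg _
      have := ciInf_le hb k₀
      rw [torusAbs]
      exact this
    · apply le_ciInf
      intro k
      by_cases hkk : k = k₀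
      · subst hkk
        rw [ha, hz']
      · have hm1 : (1:ℝ) ≤ |((k - k₀ : ℤ) : ℝ)| := by
          rw [← Int.cast_abs]
          exact_mod_cast Int.one_le_abs (by omega)
        have hrw : y - 2*π*k = z' - 2*π*((k - k₀ : ℤ):ℝ) := by
          rw [hz']; push_cast; ring
        rw [hrw, abs_sub_comm]
        have htri := abs_sub_abs_le_abs_sub (2*π*((k-k₀:ℤ):ℝ)) z'
        rw [abs_mul, abs_of_pos (by positivity : (0:ℝ) < 2*π)] at htri
        nlinarith [htri, hm1, haπ]
  obtain ⟨e, he⟩ : ∃ e : ℤ ≃ ℤ, ∀ j : ℤ, (y + 2*π*((e j : ℤ):ℝ))^2 = (a + 2*π*(j:ℝ))^2 := by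
    rcases le_or_gt 0 z' with h | h
    · refine ⟨Equiv.subRight k₀, fun j => ?_⟩
      have : y + 2*π*(((j - k₀ : ℤ)):ℝ) = a + 2*π*(j:ℝ) := by
        rw [ha, abs_of_nonneg h, hz']; push_cast; ring
      simp only [Equiv.subRight_apply]
      rw [this]
    · refine ⟨(Equiv.neg ℤ).trans (Equiv.subRight k₀), fun j => ?_⟩
      have : y + 2*π*(((-j - k₀ : ℤ)):ℝ) = -(a + 2*π*(j:ℝ)) := by
        rw [ha, abs_of_neg h, hz']; push_cast; ring
      simp only [Equiv.trans_apply, Equiv.neg_apply, Equiv.subRight_apply]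
      rw [show (-j - k₀ : ℤ) = -j - k₀ from rfl] at this
      rw [this]
      ring
  have hSum : (∑' k : ℤ, Real.exp (-(y + 2*π*(k:ℝ))^2/(2*s)))
      = ∑' j : ℤ, Real.exp (-(a + 2*π*(j:ℝ))^2/(2*s)) := by
    rw [← e.tsum_eq (fun k : ℤ => Real.exp (-(y + 2*π*(k:ℝ))^2/(2*s)))]
    congr 1
    funext j
    rw [he j]
  obtain ⟨hsumA, hboundA⟩ := hk_main s hs a ha0 haπ
  have hsqrtpos : 0 < Real.sqrt (2*π*s) := Real.sqrt_pos.mpr (by positivity)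
  have hsrt : Real.sqrt (2*π/s) * Real.sqrt (2*π*s) = 2*π := by
    rw [← Real.sqrt_mul (by positivity)]
    rw [show 2*π/s*(2*π*s) = (2*π)^2 by field_simp]
    exact Real.sqrt_sq (by positivity)
  have hc : 2*π * (Real.sqrt (2*π*s))⁻¹ = Real.sqrt (2*π/s) := by
    rw [eq_comm, inv_eq_one_div, mul_one_div, eq_div_iff hsqrtpos.ne']
    exact hsrt
  have hheat : heatKernelTorus s y
      = Real.sqrt (2*π/s) * ∑' j : ℤ, Real.exp (-(a + 2*π*(j:ℝ))^2/(2*s)) := by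
    rw [heatKernelTorus, tsum_mul_left, ← mul_assoc, hc, hSum]
  have hE0 : (0:ℝ) < Real.exp (-a^2/(2*s)) := Real.exp_pos _
  have hone : Real.exp (-a^2/(2*s)) ≤ ∑' j : ℤ, Real.exp (-(a + 2*π*(j:ℝ))^2/(2*s)) := by
    have := Summable.le_tsum hsumA 0 (fun j _ => (Real.exp_pos _).le)
    simpa using this
  have hsq1 : Real.sqrt (2*π/s) * Real.sqrt (s/(2*π)) = 1 := by
    rw [← Real.sqrt_mul (by positivity)]
    rw [show 2*π/s*(s/(2*π)) = 1 by field_simp]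
    exact Real.sqrt_one
  rw [htor, hheat]
  constructor
  · exact mul_le_mul_of_nonneg_left hone (Real.sqrt_nonneg _)
  · calc Real.sqrt (2*π/s) * ∑' j : ℤ, Real.exp (-(a + 2*π*(j:ℝ))^2/(2*s))
        ≤ Real.sqrt (2*π/s) * ((2 + Real.sqrt (s/(2*π))) * Real.exp (-a^2/(2*s))) :=
          mul_le_mul_of_nonneg_left hboundA (Real.sqrt_nonneg _)
      _ = (2 * Real.sqrt (2*π/s) + Real.sqrt (2*π/s) * Real.sqrt (s/(2*π)))
            * Real.exp (-a^2/(2*s)) := by ring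
      _ = (2 * Real.sqrt (2*π/s) + 1) * Real.exp (-a^2/(2*s)) := by rw [hsq1]
      _ ≤ 2 * (1 + Real.sqrt (2*π/s)) * Real.exp (-a^2/(2*s)) := by
          have : (0:ℝ) ≤ Real.sqrt (2*π/s) := Real.sqrt_nonneg _
          nlinarith [hE0]
end

section
/- For every T > 0 there exists a constant C_T > 0 such that for all t ∈ (0, T] and all y ∈ ℝ: |∂_y p_𝕋(t, y)| ≤ (C_T / t) · p_𝕋(t, y). In particular, the sup-norm of ∂_y p_𝕋(t,·)/p_𝕋(t,·) is at most C_T/t. -/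
set_option maxHeartbeats 1000000
open Real
lemma hk_aux_summable_nat {r : ℝ} (h0 : 0 ≤ r) (h1 : r < 1) :
    Summable fun n : ℕ => ((n : ℝ) + 1) * r ^ n := by
  have h : ‖r‖ < 1 := by rwa [Real.norm_eq_abs, abs_of_nonneg h0]
  have h2 := summable_pow_mul_geometric_of_norm_lt_one 1 h (R := ℝ)
  simp only [pow_one] at h2
  have h3 : Summable fun n : ℕ => r ^ n := summable_geometric_of_norm_lt_one h
  simpa [add_mul, one_mul] using h2.add h3

lemma hk_aux_summable_int {r : ℝ} (h0 : 0 ≤ r) (h1 : r < 1) :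
    Summable fun k : ℤ => ((k.natAbs : ℝ) + 1) * r ^ k.natAbs := by
  apply Summable.of_nat_of_neg <;> simpa using hk_aux_summable_nat h0 h1

lemma hk_dist (k : ℤ) (z : ℝ) (hz : |z| ≤ π + 1) : (k.natAbs : ℝ) ≤ |z + 2 * π * k| := by
  rcases eq_or_ne k 0 with rfl | hk
  · simpa using abs_nonneg z
  · have hk1 : (1 : ℝ) ≤ (k.natAbs : ℝ) := by
      have : 1 ≤ k.natAbs := Nat.one_le_iff_ne_zero.2 (Int.natAbs_ne_zero.2 hk)
      exact_mod_cast this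
    have habsk : |(k : ℝ)| = (k.natAbs : ℝ) := by
      rw [← Int.cast_abs, Int.abs_eq_natAbs, Int.cast_natCast]
    have hA : |2 * π * (k : ℝ)| ≤ |z + 2 * π * k| + |z| := by
      calc |2 * π * (k : ℝ)| = |(z + 2 * π * k) + (-z)| := by ring_nf
        _ ≤ |z + 2 * π * k| + |(-z)| := abs_add_le _ _
        _ = |z + 2 * π * k| + |z| := by rw [abs_neg]
    have h2 : |2 * π * (k : ℝ)| = 2 * π * (k.natAbs : ℝ) := by
      rw [abs_mul, habsk, abs_of_pos (by positivity : (0:ℝ) < 2 * π)]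
    rw [h2] at hA
    nlinarith [Real.pi_gt_three]

lemma hk_key (T : ℝ) (hT : 0 < T) :
    ∃ C : ℝ, 0 < C ∧ ∀ t ∈ Set.Ioc (0:ℝ) T, ∀ y : ℝ, |y| ≤ π →
      |deriv (heatKernelTorus t) y| ≤ (C / t) * heatKernelTorus t y := by
  have hπ : 0 < π := Real.pi_pos
  set σ : ℝ := Real.exp (-(2 * π ^ 2 / T)) with hσdef
  have hσ0 : 0 < σ := Real.exp_pos _
  have hσ1 : σ < 1 := by
    rw [hσdef, Real.exp_lt_one_iff]
    have : 0 < 2 * π ^ 2 / T := by positivity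
    linarith
  set S : ℝ := ∑' k : ℤ, ((k.natAbs : ℝ) + 1) * σ ^ k.natAbs with hSdef
  have hSsum : Summable fun k : ℤ => ((k.natAbs : ℝ) + 1) * σ ^ k.natAbs :=
    hk_aux_summable_int hσ0.le hσ1
  have hS0 : 0 ≤ S := tsum_nonneg fun k => by positivity
  refine ⟨8 * σ⁻¹ * S + 1, by positivity, ?_⟩
  rintro t ⟨ht0, htT⟩ y hy
  set ρ : ℝ := Real.exp (-(1 / (2 * T))) with hρdef
  have hρ0 : 0 < ρ := Real.exp_pos _
  have hρ1 : ρ < 1 := by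
    rw [hρdef, Real.exp_lt_one_iff]
    have : 0 < 1 / (2 * T) := by positivity
    linarith
  set c : ℝ := (Real.sqrt (2 * π * t))⁻¹ with hcdef
  have hc0 : 0 < c := by
    rw [hcdef]
    exact inv_pos.2 (Real.sqrt_pos.2 (by positivity))
  set f : ℤ → ℝ → ℝ := fun k z => c * Real.exp (-(z + 2 * π * k) ^ 2 / (2 * t)) with hfdef
  set f' : ℤ → ℝ → ℝ :=
    fun k z => c * (Real.exp (-(z + 2 * π * k) ^ 2 / (2 * t)) * (-(z + 2 * π * k) / t))
    with hf'def
  -- termwise derivative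
  have hder : ∀ (k : ℤ) (z : ℝ), HasDerivAt (f k) (f' k z) z := by
    intro k z
    have h1 : HasDerivAt (fun z : ℝ => z + 2 * π * k) 1 z := (hasDerivAt_id z).add_const _
    have h2 : HasDerivAt (fun z : ℝ => (z + 2 * π * k) ^ 2) (2 * (z + 2 * π * k)) z := by
      simpa using h1.fun_pow 2
    have h3 : HasDerivAt (fun z : ℝ => -(z + 2 * π * k) ^ 2 / (2 * t))
        (-(z + 2 * π * k) / t) z := by
      have h4 := h2.neg.div_const (2 * t)
      refine h4.congr_deriv ?_
      field_simp
    simpa only [hf'def] using h3.exp.const_mul c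
  -- exponential decay bound
  have hexp_le : ∀ (k : ℤ) (z : ℝ), |z| ≤ π + 1 →
      Real.exp (-(z + 2 * π * k) ^ 2 / (2 * t)) ≤ ρ ^ k.natAbs := by
    intro k z hz
    have h1 : (k.natAbs : ℝ) ≤ |z + 2 * π * k| := hk_dist k z hz
    have h2 : (k.natAbs : ℝ) ^ 2 ≤ (z + 2 * π * k) ^ 2 := by
      rw [← sq_abs (z + 2 * π * k)]
      exact pow_le_pow_left₀ (by positivity) h1 2
    have hn : (k.natAbs : ℝ) ≤ (k.natAbs : ℝ) ^ 2 := by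
      exact_mod_cast Nat.le_self_pow two_ne_zero k.natAbs
    have h3 : (k.natAbs : ℝ) / (2 * T) ≤ (z + 2 * π * k) ^ 2 / (2 * t) :=
      div_le_div₀ (sq_nonneg _) (hn.trans h2) (by linarith) (by linarith)
    calc Real.exp (-(z + 2 * π * k) ^ 2 / (2 * t))
        ≤ Real.exp (-((k.natAbs : ℝ) / (2 * T))) := by
          apply Real.exp_le_exp.2; rw [neg_div]; linarith
      _ = ρ ^ k.natAbs := by
          rw [hρdef, ← Real.exp_nat_mul]
          congr 1
          ring
  -- norm of the termwise derivative
  have hnorm : ∀ (k : ℤ) (z : ℝ),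
      ‖f' k z‖ = c / t * (Real.exp (-(z + 2 * π * k) ^ 2 / (2 * t)) * |z + 2 * π * k|) := by
    intro k z
    simp only [hf'def, Real.norm_eq_abs, abs_mul, abs_div, abs_neg,
      abs_of_pos hc0, abs_of_pos (Real.exp_pos _), abs_of_pos ht0]
    ring
  -- uniform bound on the strip
  set u : ℤ → ℝ := fun k => c / t * (8 * (((k.natAbs : ℝ) + 1) * ρ ^ k.natAbs)) with hudef
  have hu : Summable u := ((hk_aux_summable_int hρ0.le hρ1).mul_left 8).mul_left (c / t)
  have hzbound : ∀ z ∈ Set.Ioo (y - 1) (y + 1), |z| ≤ π + 1 := by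
    intro z hz
    obtain ⟨h1, h2⟩ := hz
    obtain ⟨h3, h4⟩ := abs_le.1 hy
    rw [abs_le]; constructor <;> linarith
  have habs8 : ∀ (k : ℤ) (z : ℝ), |z| ≤ π + 1 →
      |z + 2 * π * k| ≤ 8 * ((k.natAbs : ℝ) + 1) := by
    intro k z hz
    have habsk : |(k : ℝ)| = (k.natAbs : ℝ) := by
      rw [← Int.cast_abs, Int.abs_eq_natAbs, Int.cast_natCast]
    calc |z + 2 * π * k| ≤ |z| + |2 * π * (k : ℝ)| := abs_add_le _ _
      _ = |z| + 2 * π * (k.natAbs : ℝ) := by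
          rw [abs_mul, habsk, abs_of_pos (by positivity : (0:ℝ) < 2 * π)]
      _ ≤ 8 * ((k.natAbs : ℝ) + 1) := by
          have := Real.pi_lt_d2
          have hn0 : (0:ℝ) ≤ (k.natAbs : ℝ) := by positivity
          nlinarith
  have hbound : ∀ (k : ℤ), ∀ z ∈ Set.Ioo (y - 1) (y + 1), ‖f' k z‖ ≤ u k := by
    intro k z hz
    have hz' := hzbound z hz
    rw [hnorm k z, hudef]
    have h1 := hexp_le k z hz'
    have h2 := habs8 k z hz'
    have h3 : Real.exp (-(z + 2 * π * k) ^ 2 / (2 * t)) * |z + 2 * π * k|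
        ≤ ρ ^ k.natAbs * (8 * ((k.natAbs : ℝ) + 1)) :=
      mul_le_mul h1 h2 (abs_nonneg _) (by positivity)
    have hct : 0 ≤ c / t := by positivity
    calc c / t * (Real.exp (-(z + 2 * π * k) ^ 2 / (2 * t)) * |z + 2 * π * k|)
        ≤ c / t * (ρ ^ k.natAbs * (8 * ((k.natAbs : ℝ) + 1))) :=
          mul_le_mul_of_nonneg_left h3 hct
      _ = c / t * (8 * (((k.natAbs : ℝ) + 1) * ρ ^ k.natAbs)) := by ring
  have hymem : y ∈ Set.Ioo (y - 1) (y + 1) := by constructor <;> linarith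
  have hyI : |y| ≤ π + 1 := hy.trans (by linarith)
  have hg0 : Summable fun k : ℤ => f k y := by
    refine Summable.of_nonneg_of_le (fun k => by positivity) (fun k => ?_)
      ((hk_aux_summable_int hρ0.le hρ1).mul_left c)
    simp only [hfdef]
    have h1 := hexp_le k y hyI
    have h2 : ρ ^ k.natAbs ≤ ((k.natAbs : ℝ) + 1) * ρ ^ k.natAbs :=
      le_mul_of_one_le_left (by positivity)
        (by have := Nat.cast_nonneg (α := ℝ) k.natAbs; linarith)
    calc c * Real.exp (-(y + 2 * π * k) ^ 2 / (2 * t)) ≤ c * ρ ^ k.natAbs :=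
          mul_le_mul_of_nonneg_left h1 hc0.le
      _ ≤ c * (((k.natAbs : ℝ) + 1) * ρ ^ k.natAbs) := mul_le_mul_of_nonneg_left h2 hc0.le
  -- termwise differentiation of the series
  have hDer : HasDerivAt (fun z => ∑' k : ℤ, f k z) (∑' k : ℤ, f' k y) y :=
    hasDerivAt_tsum_of_isPreconnected hu isOpen_Ioo (convex_Ioo _ _).isPreconnected
      (fun k z _ => hder k z) hbound hymem hg0 hymem
  have hHK : heatKernelTorus t = fun z => 2 * π * ∑' k : ℤ, f k z := by
    funext z
    simp only [heatKernelTorus, hfdef, hcdef]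
  have hD2 : HasDerivAt (heatKernelTorus t) (2 * π * ∑' k : ℤ, f' k y) y := by
    rw [hHK]
    exact hDer.const_mul (2 * π)
  have hderiv_eq : deriv (heatKernelTorus t) y = 2 * π * ∑' k : ℤ, f' k y := hD2.deriv
  have hsumnorm : Summable fun k : ℤ => ‖f' k y‖ :=
    Summable.of_nonneg_of_le (fun k => norm_nonneg _) (fun k => hbound k y hymem) hu
  -- final termwise bound
  set K : ℝ := c / t * Real.exp (-y ^ 2 / (2 * t)) * σ⁻¹ * 8 with hKdef
  have hvsum : Summable fun k : ℤ => K * (((k.natAbs : ℝ) + 1) * σ ^ k.natAbs) :=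
    hSsum.mul_left K
  have hvb : ∀ k : ℤ, ‖f' k y‖ ≤ K * (((k.natAbs : ℝ) + 1) * σ ^ k.natAbs) := by
    intro k
    rw [hnorm k y]
    have habsk : |(k : ℝ)| = (k.natAbs : ℝ) := by
      rw [← Int.cast_abs, Int.abs_eq_natAbs, Int.cast_natCast]
    have hΔ : 4 * π ^ 2 * (((k.natAbs : ℝ)) ^ 2 - (k.natAbs : ℝ))
        ≤ (y + 2 * π * k) ^ 2 - y ^ 2 := by
      have hk2 : ((k : ℝ)) ^ 2 = ((k.natAbs : ℝ)) ^ 2 := by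
        rw [← sq_abs (k : ℝ), habsk]
      have hky : -(4 * π * (k.natAbs : ℝ) * π) ≤ 4 * π * (k : ℝ) * y := by
        have h1 : |4 * π * (k : ℝ) * y| ≤ 4 * π * (k.natAbs : ℝ) * π := by
          rw [abs_mul, abs_mul, abs_mul]
          rw [abs_of_nonneg (by norm_num : (0:ℝ) ≤ 4), abs_of_pos hπ, habsk]
          have hn0 : (0 : ℝ) ≤ 4 * π * (k.natAbs : ℝ) := by positivity
          exact mul_le_mul_of_nonneg_left hy hn0
        linarith [neg_abs_le (4 * π * (k : ℝ) * y)]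
      nlinarith [hk2, hky]
    have hn2 : ((k.natAbs : ℝ)) ≤ ((k.natAbs : ℝ)) ^ 2 := by
      exact_mod_cast Nat.le_self_pow two_ne_zero k.natAbs
    have hΔ0 : 0 ≤ (y + 2 * π * k) ^ 2 - y ^ 2 := by nlinarith [hΔ, hn2]
    have hgoal : 2 * π ^ 2 / T * ((k.natAbs : ℝ) - 1)
        ≤ ((y + 2 * π * k) ^ 2 - y ^ 2) / (2 * t) := by
      rw [le_div_iff₀ (by linarith : (0:ℝ) < 2 * t), div_mul_eq_mul_div, div_mul_eq_mul_div,
        div_le_iff₀ hT]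
      rcases Nat.eq_zero_or_pos k.natAbs with h0 | h1
      · rw [h0]
        push_cast
        nlinarith [mul_nonneg hΔ0 hT.le, ht0, hπ]
      · have hn1 : (1 : ℝ) ≤ (k.natAbs : ℝ) := by exact_mod_cast h1
        have e1 : 2 * π ^ 2 * ((k.natAbs : ℝ) - 1) * (2 * t)
            = 4 * π ^ 2 * ((k.natAbs : ℝ) - 1) * t := by ring
        rw [e1]
        calc 4 * π ^ 2 * ((k.natAbs : ℝ) - 1) * t
            ≤ 4 * π ^ 2 * ((k.natAbs : ℝ) - 1) * T := by
              apply mul_le_mul_of_nonneg_left htT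
              nlinarith [hn1, hπ]
          _ ≤ 4 * π ^ 2 * (((k.natAbs : ℝ)) ^ 2 - (k.natAbs : ℝ)) * T := by
              apply mul_le_mul_of_nonneg_right _ hT.le
              nlinarith [sq_nonneg ((k.natAbs : ℝ) - 1), hπ]
          _ ≤ ((y + 2 * π * k) ^ 2 - y ^ 2) * T := mul_le_mul_of_nonneg_right hΔ hT.le
    have hE : Real.exp (-(y + 2 * π * k) ^ 2 / (2 * t))
        ≤ Real.exp (-y ^ 2 / (2 * t)) * (σ ^ k.natAbs * σ⁻¹) := by
      rw [hσdef, ← Real.exp_nat_mul, ← Real.exp_neg, ← Real.exp_add, ← Real.exp_add]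
      apply Real.exp_le_exp.2
      have hid : -(y + 2 * π * k) ^ 2 / (2 * t)
          = -y ^ 2 / (2 * t) - ((y + 2 * π * k) ^ 2 - y ^ 2) / (2 * t) := by ring
      have hid2 : (k.natAbs : ℝ) * -(2 * π ^ 2 / T) + -(-(2 * π ^ 2 / T))
          = -(2 * π ^ 2 / T * ((k.natAbs : ℝ) - 1)) := by ring
      rw [hid, hid2]
      linarith [hgoal]
    have habs8' : |y + 2 * π * k| ≤ 8 * ((k.natAbs : ℝ) + 1) := habs8 k y hyI
    have h7 : Real.exp (-(y + 2 * π * k) ^ 2 / (2 * t)) * |y + 2 * π * k|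
        ≤ Real.exp (-y ^ 2 / (2 * t)) * (σ ^ k.natAbs * σ⁻¹) * (8 * ((k.natAbs : ℝ) + 1)) :=
      mul_le_mul hE habs8' (abs_nonneg _) (by positivity)
    calc c / t * (Real.exp (-(y + 2 * π * k) ^ 2 / (2 * t)) * |y + 2 * π * k|)
        ≤ c / t * (Real.exp (-y ^ 2 / (2 * t)) * (σ ^ k.natAbs * σ⁻¹)
            * (8 * ((k.natAbs : ℝ) + 1))) := mul_le_mul_of_nonneg_left h7 (by positivity)
      _ = K * (((k.natAbs : ℝ) + 1) * σ ^ k.natAbs) := by rw [hKdef]; ring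
  have hts : ∑' k : ℤ, ‖f' k y‖ ≤ K * S := by
    rw [hSdef, ← tsum_mul_left]
    exact Summable.tsum_le_tsum hvb hsumnorm hvsum
  -- lower bound for the kernel
  have hf0 : f 0 y = c * Real.exp (-y ^ 2 / (2 * t)) := by
    simp [hfdef]
  have hle0 : c * Real.exp (-y ^ 2 / (2 * t)) ≤ ∑' k : ℤ, f k y := by
    rw [← hf0]
    exact Summable.le_tsum hg0 0 fun k _ => by positivity
  have hplow : 2 * π * (c * Real.exp (-y ^ 2 / (2 * t))) ≤ heatKernelTorus t y := by
    rw [hHK]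
    exact mul_le_mul_of_nonneg_left hle0 (by positivity)
  have hC0 : 0 ≤ 8 * σ⁻¹ * S := mul_nonneg (by positivity) hS0
  rw [hderiv_eq, abs_mul, abs_of_pos (by positivity : (0:ℝ) < 2 * π)]
  have h8 : |∑' k : ℤ, f' k y| ≤ K * S := le_trans (norm_tsum_le_tsum_norm hsumnorm) hts
  calc 2 * π * |∑' k : ℤ, f' k y| ≤ 2 * π * (K * S) :=
        mul_le_mul_of_nonneg_left h8 (by positivity)
    _ = 8 * σ⁻¹ * S / t * (2 * π * (c * Real.exp (-y ^ 2 / (2 * t)))) := by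
        rw [hKdef]; field_simp
    _ ≤ (8 * σ⁻¹ * S + 1) / t * heatKernelTorus t y := by
        apply mul_le_mul _ hplow (by positivity) (div_nonneg (by linarith) ht0.le)
        exact (div_le_div_iff_of_pos_right ht0).2 (by linarith)

lemma hk_periodic (t : ℝ) : Function.Periodic (heatKernelTorus t) (2 * π) := by
  intro y
  unfold heatKernelTorus
  congr 1
  rw [← (Equiv.addRight (1 : ℤ)).tsum_eq
    (fun k : ℤ => (Real.sqrt (2 * π * t))⁻¹ * Real.exp (-(y + 2 * π * k) ^ 2 / (2 * t)))]
  apply tsum_congr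
  intro k
  simp only [Equiv.coe_addRight]
  push_cast
  ring_nf

lemma hk_deriv_periodic (t : ℝ) : Function.Periodic (deriv (heatKernelTorus t)) (2 * π) := by
  intro y
  rw [← deriv_comp_add_const]
  congr 1
  ext z
  exact hk_periodic t z


/-- **Gradient estimate for the periodic heat kernel:** for every `T > 0` there is
`C_T > 0` such that `|∂_y p_𝕋(t,y)| ≤ (C_T/t) p_𝕋(t,y)` for all `t ∈ (0,T]`, `y ∈ ℝ`. -/
theorem heatKernelTorus_gradient_estimate (T : ℝ) (hT : 0 < T) :
    ∃ C : ℝ, 0 < C ∧ ∀ t : ℝ, t ∈ Set.Ioc 0 T → ∀ y : ℝ,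
      |deriv (fun z => heatKernelTorus t z) y| ≤ (C / t) * heatKernelTorus t y := by
  obtain ⟨C, hC, h⟩ := hk_key T hT
  refine ⟨C, hC, ?_⟩
  intro t ht y
  have hπ := Real.pi_pos
  set n : ℤ := ⌊(y + π) / (2 * π)⌋ with hn
  have h1 : (n : ℝ) ≤ (y + π) / (2 * π) := Int.floor_le _
  have h2 : (y + π) / (2 * π) < n + 1 := Int.lt_floor_add_one _
  have hb1 : (n : ℝ) * (2 * π) ≤ y + π := by
    rwa [← le_div_iff₀ (by positivity : (0:ℝ) < 2 * π)]
  have hb2 : y + π < ((n : ℝ) + 1) * (2 * π) := by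
    rwa [← div_lt_iff₀ (by positivity : (0:ℝ) < 2 * π)]
  have hy'abs : |y - n * (2 * π)| ≤ π := by
    rw [abs_le]
    constructor <;> nlinarith
  have e1 : heatKernelTorus t (y - n * (2 * π)) = heatKernelTorus t y :=
    (hk_periodic t).sub_int_mul_eq n
  have e2 : deriv (heatKernelTorus t) (y - n * (2 * π)) = deriv (heatKernelTorus t) y :=
    (hk_deriv_periodic t).sub_int_mul_eq n
  have h3 := h t ht (y - n * (2 * π)) hy'abs
  rw [e1, e2] at h3
  exact h3
end

section
/- For every T > 0 there exists a constant C_T > 0 such that for all t ∈ (0, T] and all x, y ∈ ℝ: | log p_𝕋(t, y) − log p_𝕋(t, y − x) | ≤ C_T · |x| / t. -/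
open Real

namespace HKAux

noncomputable def term (t y : ℝ) (k : ℤ) : ℝ := Real.exp (-(y + 2 * π * k) ^ 2 / (2 * t))

noncomputable def dterm (t y : ℝ) (k : ℤ) : ℝ := term t y k * (-(y + 2 * π * k) / t)

noncomputable def S (t y : ℝ) : ℝ := ∑' k : ℤ, term t y k

noncomputable def D (t y : ℝ) : ℝ := ∑' k : ℤ, dterm t y k

noncomputable def rho (T : ℝ) : ℝ := Real.exp (-(2 * π ^ 2) / T)

noncomputable def Cc (T : ℝ) : ℝ :=
  ∑' k : ℤ, (π + 3 * π * k.natAbs) * rho T ^ (k.natAbs - 1)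

variable {T t : ℝ}

lemma rho_pos (T : ℝ) : 0 < rho T := Real.exp_pos _

lemma rho_lt_one (hT : 0 < T) : rho T < 1 := by
  rw [rho, exp_lt_one_iff]
  have := Real.pi_pos
  have : 0 < 2 * π ^ 2 := by positivity
  exact div_neg_of_neg_of_pos (by linarith) hT

/-- master summability lemma -/
lemma summable_master {ρ : ℝ} (hρ0 : 0 < ρ) (hρ1 : ρ < 1) (a b : ℝ) :
    Summable (fun k : ℤ => (a + b * k.natAbs) * ρ ^ (k.natAbs - 1)) := by
  have hnat : Summable (fun n : ℕ => (a + b * n) * ρ ^ (n - 1)) := by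
    have h1 : Summable (fun n : ℕ => ρ⁻¹ * ((|a| + |b| * n) * ρ ^ n)) := by
      apply Summable.mul_left
      have hg : Summable (fun n : ℕ => |a| * ρ ^ n) :=
        (summable_geometric_of_lt_one hρ0.le hρ1).mul_left _
      have hg2 : Summable (fun n : ℕ => |b| * ((n : ℝ) ^ 1 * ρ ^ n)) :=
        (summable_pow_mul_geometric_of_norm_lt_one (R := ℝ) 1
          (by rw [Real.norm_eq_abs, abs_of_pos hρ0]; exact hρ1)).mul_left _
      have := hg.add hg2
      refine this.congr fun n => by ring
    apply h1.of_norm_bounded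
    intro n
    rw [Real.norm_eq_abs, abs_mul]
    have h2 : |(a + b * n : ℝ)| ≤ |a| + |b| * n := by
      refine (abs_add_le _ _).trans ?_
      rw [abs_mul, Nat.abs_cast]
    have h3 : |ρ ^ (n - 1)| ≤ ρ⁻¹ * ρ ^ n := by
      rw [abs_of_pos (pow_pos hρ0 _)]
      cases n with
      | zero => simpa using (one_le_inv₀ hρ0).mpr hρ1.le
      | succ m =>
        simp only [Nat.add_sub_cancel, pow_succ]
        rw [← mul_assoc]
        field_simp
        exact le_rfl
    calc |(a + b * n : ℝ)| * |ρ ^ (n - 1)| ≤ (|a| + |b| * n) * (ρ⁻¹ * ρ ^ n) := by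
          apply mul_le_mul h2 h3 (abs_nonneg _) (by positivity)
      _ = ρ⁻¹ * ((|a| + |b| * n) * ρ ^ n) := by ring
  apply Summable.of_nat_of_neg
  · exact hnat.congr fun n => by simp
  · exact hnat.congr fun n => by simp

lemma pi_lower : (1 : ℝ) ≤ π := by linarith [Real.pi_gt_three]

/-- squared-distance lower bound on the window -/
lemma sq_lower {z : ℝ} (hz : |z| ≤ π + 1) (k : ℤ) :
    (2 * π * (k.natAbs - 1 : ℕ)) ^ 2 ≤ (z + 2 * π * k) ^ 2 := by
  rcases eq_or_ne k 0 with rfl | hk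
  · simpa using sq_nonneg z
  · have hn : 1 ≤ k.natAbs := Nat.one_le_iff_ne_zero.mpr (Int.natAbs_ne_zero.mpr hk)
    have hcast : ((k.natAbs - 1 : ℕ) : ℝ) = (k.natAbs : ℝ) - 1 := by
      push_cast [Nat.cast_sub hn]; ring
    have habs : |(k : ℝ)| = (k.natAbs : ℝ) := by
      rw [Nat.cast_natAbs, Int.cast_abs]
    have h1 : 2 * π * (k.natAbs : ℝ) - (π + 1) ≥ 2 * π * ((k.natAbs : ℝ) - 1) := by
      have := pi_lower; nlinarith
    have h2 : (2 : ℝ) * π * (k.natAbs : ℝ) - (π + 1) ≤ |z + 2 * π * k| := by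
      have : |2 * π * (k : ℝ)| - |z| ≤ |z + 2 * π * k| := by
        have := abs_sub_abs_le_abs_sub (2 * π * (k : ℝ)) (-z)
        simp only [abs_neg, sub_neg_eq_add] at this
        calc |2 * π * (k : ℝ)| - |z| ≤ |2 * π * (k : ℝ) + z| := this
          _ = |z + 2 * π * k| := by rw [add_comm]
      have habs2 : |2 * π * (k : ℝ)| = 2 * π * (k.natAbs : ℝ) := by
        rw [abs_mul, habs, abs_of_pos (by positivity : (0:ℝ) < 2 * π)]
      linarith
    have h3 : (0 : ℝ) ≤ 2 * π * ((k.natAbs : ℝ) - 1) := by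
      have hn' : (1 : ℝ) ≤ (k.natAbs : ℝ) := by exact_mod_cast hn
      have := Real.pi_pos; nlinarith
    have h4 : 2 * π * ((k.natAbs - 1 : ℕ) : ℝ) ≤ |z + 2 * π * k| := by
      rw [hcast]; linarith
    calc (2 * π * (k.natAbs - 1 : ℕ)) ^ 2 ≤ |z + 2 * π * k| ^ 2 := by
          apply pow_le_pow_left₀ (by rw [hcast]; exact h3) h4
      _ = (z + 2 * π * k) ^ 2 := sq_abs _

lemma term_pos (t y : ℝ) (k : ℤ) : 0 < term t y k := Real.exp_pos _

lemma term_le_rho (hT : 0 < T) (ht : 0 < t) (htT : t ≤ T) {z : ℝ} (hz : |z| ≤ π + 1) (k : ℤ) :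
    term t z k ≤ rho T ^ (k.natAbs - 1) := by
  have hm := sq_lower hz k
  rw [term, rho, ← Real.exp_nat_mul]
  apply Real.exp_le_exp.mpr
  set m : ℕ := k.natAbs - 1 with hmdef
  have h0 : (0:ℝ) ≤ (m:ℝ) := Nat.cast_nonneg m
  have hm2 : (m:ℝ) ≤ (m:ℝ)^2 := by
    have := Nat.le_self_pow (two_ne_zero) m
    exact_mod_cast this
  have hπ := Real.pi_pos
  have hb : 4*π^2*(m:ℝ) ≤ (z+2*π*k)^2 := by nlinarith [hm]
  have h1 : 2*π^2*(m:ℝ)/T ≤ (z+2*π*k)^2/(2*t) := by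
    rw [div_le_div_iff₀ (by positivity) (by positivity)]
    nlinarith [mul_le_mul_of_nonneg_right hb ht.le,
      mul_le_mul_of_nonneg_left htT (sq_nonneg (z+2*π*(k:ℝ)))]
  have h2 : -((z + 2*π*k)^2/(2*t)) ≤ -(2*π^2*(m:ℝ)/T) := neg_le_neg h1
  calc -(z + 2*π*↑k)^2/(2*t) = -((z + 2*π*↑k)^2/(2*t)) := by ring
    _ ≤ -(2*π^2*(m:ℝ)/T) := h2
    _ = (m:ℝ) * (-(2*π^2)/T) := by ring

lemma term_hasDeriv (ht : 0 < t) (k : ℤ) (y : ℝ) :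
    HasDerivAt (fun z => term t z k) (dterm t y k) y := by
  have h1 : HasDerivAt (fun z : ℝ => z + 2*π*k) 1 y := (hasDerivAt_id y).add_const _
  have h2 : HasDerivAt (fun z : ℝ => -(z + 2 * π * k) ^ 2 / (2 * t))
      (-(y + 2*π*k)/t) y := by
    have h3 : HasDerivAt (fun z : ℝ => -(z + 2 * π * k) ^ 2 / (2 * t))
        (-(((2:ℕ):ℝ) * (y + 2*π*k)^(2-1) * 1)/(2*t)) y := (h1.pow 2).neg.div_const (2*t)
    convert h3 using 1
    push_cast
    field_simp
  have h4 := h2.exp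
  exact h4

lemma summable_term (hT : 0 < T) (ht : 0 < t) (htT : t ≤ T) {z : ℝ} (hz : |z| ≤ π + 1) :
    Summable (term t z) := by
  have h := summable_master (rho_pos T) (rho_lt_one hT) 1 0
  apply h.of_norm_bounded
  intro k
  rw [Real.norm_eq_abs, abs_of_pos (term_pos t z k)]
  have := term_le_rho hT ht htT hz k
  simpa using this

lemma abs_arg_le (z : ℝ) (k : ℤ) : |z + 2 * π * k| ≤ |z| + 2 * π * k.natAbs := by
  have h1 := abs_add_le z (2 * π * k)
  have h2 : |2 * π * (k:ℝ)| = 2 * π * (k.natAbs : ℝ) := by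
    rw [abs_mul, Nat.cast_natAbs, Int.cast_abs, abs_of_pos (by positivity : (0:ℝ) < 2 * π)]
  linarith

lemma dterm_bound_window (hT : 0 < T) (ht : 0 < t) (htT : t ≤ T) {z : ℝ} (hz : |z| ≤ π + 1)
    (k : ℤ) : ‖dterm t z k‖ ≤ ((π + 1) / t + 2 * π / t * k.natAbs) * rho T ^ (k.natAbs - 1) := by
  rw [Real.norm_eq_abs, dterm, abs_mul, abs_of_pos (term_pos t z k)]
  have hb1 : |(-(z + 2*π*k)/t)| ≤ ((π + 1) + 2*π*k.natAbs)/t := by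
    rw [abs_div, abs_of_pos ht, abs_neg]
    have := abs_arg_le z k
    gcongr
    linarith
  have hb2 := term_le_rho hT ht htT hz k
  calc term t z k * |(-(z + 2*π*k)/t)|
      ≤ rho T ^ (k.natAbs - 1) * (((π + 1) + 2*π*k.natAbs)/t) :=
        mul_le_mul hb2 hb1 (abs_nonneg _) (pow_nonneg (rho_pos T).le _)
    _ = ((π + 1) / t + 2 * π / t * k.natAbs) * rho T ^ (k.natAbs - 1) := by ring

lemma hasDerivAt_S (hT : 0 < T) (ht : 0 < t) (htT : t ≤ T) {y : ℝ} (hy : |y| ≤ π) :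
    HasDerivAt (fun z => S t z) (D t y) y := by
  have hπ := Real.pi_pos
  obtain ⟨hy1, hy2⟩ := abs_le.mp hy
  have hW : y ∈ Set.Ioo (-(π+1)) (π+1) := ⟨by linarith, by linarith⟩
  show HasDerivAt (fun z => ∑' k, term t z k) (∑' k, dterm t y k) y
  exact hasDerivAt_tsum_of_isPreconnected
    (summable_master (rho_pos T) (rho_lt_one hT) ((π+1)/t) (2*π/t))
    isOpen_Ioo (convex_Ioo _ _).isPreconnected
    (fun k z _ => term_hasDeriv ht k z)
    (fun k z hzW => dterm_bound_window hT ht htT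
      (by rw [abs_le]; exact ⟨hzW.1.le, hzW.2.le⟩) k)
    (y₀ := 0) ⟨by linarith, by linarith⟩
    (summable_term hT ht htT (by simp; positivity)) hW

lemma dterm_bound_key (hT : 0 < T) (ht : 0 < t) (htT : t ≤ T) {y : ℝ} (hy : |y| ≤ π) (k : ℤ) :
    ‖dterm t y k‖ ≤ (π + 3 * π * k.natAbs) * rho T ^ (k.natAbs - 1)
      * (Real.exp (-y ^ 2 / (2 * t)) / t) := by
  have hπ := Real.pi_pos
  obtain ⟨hyl, hyr⟩ := abs_le.mp hy
  have hb1 : |(-(y + 2*π*k)/t)| ≤ (π + 3*π*(k.natAbs:ℝ))/t := by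
    rw [abs_div, abs_of_pos ht, abs_neg]
    have h1 := abs_arg_le y k
    have h2 : (0:ℝ) ≤ (k.natAbs:ℝ) := Nat.cast_nonneg _
    gcongr
    nlinarith
  have hexp : term t y k ≤ Real.exp (-y^2/(2*t)) * rho T ^ (k.natAbs - 1) := by
    rcases eq_or_ne k 0 with rfl | hk
    · simp only [term, Int.natAbs_zero, Int.cast_zero, mul_zero, add_zero, Nat.zero_sub,
        pow_zero, mul_one]
      norm_num
    · have hn : 1 ≤ k.natAbs := Nat.one_le_iff_ne_zero.mpr (Int.natAbs_ne_zero.mpr hk)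
      have hnR : (1:ℝ) ≤ (k.natAbs:ℝ) := by exact_mod_cast hn
      have hcast : ((k.natAbs - 1:ℕ):ℝ) = (k.natAbs:ℝ) - 1 := by
        rw [Nat.cast_sub hn]; norm_num
      have habs : |(k:ℝ)| = (k.natAbs:ℝ) := by rw [Nat.cast_natAbs, Int.cast_abs]
      have hlow : 2*π*(k.natAbs:ℝ) - π ≤ |y + 2*π*k| := by
        have h3 := abs_sub_abs_le_abs_sub (2 * π * (k : ℝ)) (-y)
        simp only [abs_neg, sub_neg_eq_add] at h3
        have h4 : |2 * π * (k : ℝ)| = 2 * π * (k.natAbs : ℝ) := by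
          rw [abs_mul, habs, abs_of_pos (by positivity : (0:ℝ) < 2 * π)]
        have h5 : |2 * π * (k:ℝ) + y| = |y + 2*π*k| := by rw [add_comm]
        rw [h4, h5] at h3
        have hyabs : |y| ≤ π := hy
        linarith
      have h0 : (0:ℝ) ≤ 2*π*(k.natAbs:ℝ) - π := by nlinarith
      have hs2 : (2*π*(k.natAbs:ℝ) - π)^2 ≤ |y + 2*π*k|^2 := pow_le_pow_left₀ h0 hlow 2
      rw [sq_abs] at hs2
      have hy2 : y^2 ≤ π^2 := by nlinarith
      have hsq : y^2 + 4*π^2*((k.natAbs:ℝ)-1) ≤ (y+2*π*k)^2 := by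
        nlinarith [sq_nonneg ((k.natAbs:ℝ)-1)]
      rw [term, rho, ← Real.exp_nat_mul, ← Real.exp_add]
      apply Real.exp_le_exp.mpr
      rw [hcast]
      have h5 : 2*π^2*((k.natAbs:ℝ)-1)/T ≤ 4*π^2*((k.natAbs:ℝ)-1)/(2*t) := by
        have hnn : (0:ℝ) ≤ 2*π^2*((k.natAbs:ℝ)-1) := by nlinarith
        rw [div_le_div_iff₀ hT (by positivity)]
        nlinarith [mul_le_mul_of_nonneg_left htT hnn]
      have h6 : (y^2 + 4*π^2*((k.natAbs:ℝ)-1))/(2*t) ≤ (y+2*π*k)^2/(2*t) := by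
        gcongr
      have e2 : (y^2 + 4*π^2*((k.natAbs:ℝ)-1))/(2*t)
          = y^2/(2*t) + 4*π^2*((k.natAbs:ℝ)-1)/(2*t) := by ring
      rw [e2] at h6
      have e3 : -(y + 2*π*(k:ℝ))^2/(2*t) = -((y+2*π*(k:ℝ))^2/(2*t)) := by ring
      have e4 : -y^2/(2*t) + ((k.natAbs:ℝ)-1) * (-(2*π^2)/T)
          = -(y^2/(2*t)) - 2*π^2*((k.natAbs:ℝ)-1)/T := by ring
      rw [e3, e4]
      linarith
  rw [Real.norm_eq_abs, dterm, abs_mul, abs_of_pos (term_pos t y k)]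
  calc term t y k * |(-(y + 2*π*k)/t)|
      ≤ (Real.exp (-y^2/(2*t)) * rho T ^ (k.natAbs - 1)) * ((π + 3*π*(k.natAbs:ℝ))/t) :=
        mul_le_mul hexp hb1 (abs_nonneg _)
          (mul_nonneg (Real.exp_nonneg _) (pow_nonneg (rho_pos T).le _))
    _ = (π + 3 * π * k.natAbs) * rho T ^ (k.natAbs - 1)
        * (Real.exp (-y ^ 2 / (2 * t)) / t) := by ring

lemma key_estimate (hT : 0 < T) (ht : 0 < t) (htT : t ≤ T) {y : ℝ} (hy : |y| ≤ π) :
    |D t y| ≤ Cc T / t * S t y := by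
  have hπ := Real.pi_pos
  have hmaster := (summable_master (rho_pos T) (rho_lt_one hT) π (3*π)).mul_right
    (Real.exp (-y ^ 2 / (2 * t)) / t)
  have hsum_norm : Summable (fun k => ‖dterm t y k‖) :=
    Summable.of_nonneg_of_le (fun k => norm_nonneg _) (dterm_bound_key hT ht htT hy) hmaster
  have h1 : |D t y| ≤ ∑' k, ‖dterm t y k‖ := by
    rw [← Real.norm_eq_abs]
    exact norm_tsum_le_tsum_norm hsum_norm
  have h2 : ∑' k, ‖dterm t y k‖
      ≤ ∑' k : ℤ, (π + 3 * π * k.natAbs) * rho T ^ (k.natAbs - 1)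
          * (Real.exp (-y ^ 2 / (2 * t)) / t) :=
    Summable.tsum_le_tsum (dterm_bound_key hT ht htT hy) hsum_norm hmaster
  have h3 : ∑' k : ℤ, (π + 3 * π * k.natAbs) * rho T ^ (k.natAbs - 1)
      * (Real.exp (-y ^ 2 / (2 * t)) / t) = Cc T * (Real.exp (-y ^ 2 / (2 * t)) / t) :=
    tsum_mul_right
  have h4 : Real.exp (-y^2/(2*t)) ≤ S t y := by
    have hle := Summable.le_tsum (summable_term hT ht htT (hy.trans (by linarith))) 0
      (fun j _ => (term_pos t y j).le)
    have he : term t y 0 = Real.exp (-y^2/(2*t)) := by rw [term]; norm_num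
    rw [he] at hle
    exact hle
  have hCc : 0 ≤ Cc T := by
    apply tsum_nonneg
    intro k
    have := (rho_pos T).le
    positivity
  calc |D t y| ≤ Cc T * (Real.exp (-y ^ 2 / (2 * t)) / t) := by
        rw [← h3]; exact h1.trans h2
    _ = Cc T / t * Real.exp (-y ^ 2 / (2 * t)) := by ring
    _ ≤ Cc T / t * S t y := by
        apply mul_le_mul_of_nonneg_left h4
        positivity

lemma S_shift (t y : ℝ) (m : ℤ) : S t (y - 2 * π * m) = S t y := by
  unfold S
  rw [← (Equiv.subRight m).tsum_eq (term t y)]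
  apply tsum_congr
  intro k
  simp only [Equiv.subRight_apply]
  unfold term
  congr 1
  push_cast
  ring

lemma round_window (y : ℝ) : |y - 2 * π * (round (y / (2 * π)))| ≤ π := by
  have hπ := Real.pi_pos
  have h := abs_sub_round (y / (2*π))
  have he : y - 2*π*(round (y/(2*π))) = (2*π) * (y/(2*π) - round (y/(2*π))) := by
    field_simp
  rw [he, abs_mul, abs_of_pos (by positivity : (0:ℝ) < 2*π)]
  calc 2*π * |y/(2*π) - (round (y/(2*π)) : ℝ)| ≤ 2*π * (1/2) := by
        apply mul_le_mul_of_nonneg_left h (by positivity)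
    _ = π := by ring

lemma S_pos (hT : 0 < T) (ht : 0 < t) (htT : t ≤ T) (y : ℝ) : 0 < S t y := by
  have hπ := Real.pi_pos
  have hw := round_window y
  rw [← S_shift t y (round (y/(2*π)))]
  have hsum := summable_term hT ht htT (z := y - 2*π*(round (y/(2*π)))) (by linarith)
  have hle := Summable.le_tsum hsum 0 (fun j _ => (term_pos _ _ j).le)
  exact lt_of_lt_of_le (term_pos _ _ 0) hle

lemma Cc_pos (hT : 0 < T) : 0 < Cc T := by
  have hπ := Real.pi_pos
  have hsum := summable_master (rho_pos T) (rho_lt_one hT) π (3*π)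
  refine Summable.tsum_pos hsum (fun k => ?_) 0 ?_
  · have := (rho_pos T).le
    positivity
  · simpa using hπ

noncomputable def phi (t y : ℝ) : ℝ :=
  D t (y - 2 * π * (round (y / (2 * π)))) / S t (y - 2 * π * (round (y / (2 * π))))

lemma hasDerivAt_logS (hT : 0 < T) (ht : 0 < t) (htT : t ≤ T) (y : ℝ) :
    HasDerivAt (fun z => Real.log (S t z)) (phi t y) y := by
  set m := round (y/(2*π)) with hm
  have hw : |y - 2*π*(m:ℝ)| ≤ π := round_window y
  have hS : HasDerivAt (fun z => S t z) (D t (y - 2*π*(m:ℝ))) y := by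
    have hinner : HasDerivAt (fun z : ℝ => z - 2*π*(m:ℝ)) 1 y := (hasDerivAt_id y).sub_const _
    have houter : HasDerivAt (fun z => S t z) (D t (y - 2*π*(m:ℝ))) (y - 2*π*(m:ℝ)) :=
      hasDerivAt_S hT ht htT hw
    have hcomp := HasDerivAt.comp y houter hinner
    rw [mul_one] at hcomp
    have hfun : (fun z => S t z) = ((fun z => S t z) ∘ fun z : ℝ => z - 2*π*(m:ℝ)) := by
      funext z
      exact (S_shift t z m).symm
    rw [hfun]
    exact hcomp
  have hpos := S_pos hT ht htT y
  have hres := hS.log (ne_of_gt hpos)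
  have heq : D t (y - 2*π*(m:ℝ)) / S t y = phi t y := by
    unfold phi
    rw [← hm, ← S_shift t y m]
  rwa [heq] at hres

lemma phi_bound (hT : 0 < T) (ht : 0 < t) (htT : t ≤ T) (y : ℝ) :
    ‖phi t y‖ ≤ Cc T / t := by
  have hw : |y - 2*π*(round (y/(2*π)) : ℝ)| ≤ π := round_window y
  have hpos : 0 < S t (y - 2*π*(round (y/(2*π)) : ℝ)) := S_pos hT ht htT _
  rw [Real.norm_eq_abs]
  unfold phi
  rw [abs_div, abs_of_pos hpos, div_le_iff₀ hpos]
  exact key_estimate hT ht htT hw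

lemma log_hk (hT : 0 < T) (ht : 0 < t) (htT : t ≤ T) (y : ℝ) :
    Real.log (heatKernelTorus t y)
      = Real.log (2 * π * (Real.sqrt (2 * π * t))⁻¹) + Real.log (S t y) := by
  have hπ := Real.pi_pos
  have hs : (0:ℝ) < Real.sqrt (2*π*t) := Real.sqrt_pos.mpr (by positivity)
  have hS := S_pos hT ht htT y
  have h1 : heatKernelTorus t y = (2*π*(Real.sqrt (2*π*t))⁻¹) * S t y := by
    unfold heatKernelTorus S term
    rw [tsum_mul_left]
    ring
  rw [h1, Real.log_mul (by positivity) hS.ne']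

end HKAux

/-- **Log-Lipschitz estimate for the periodic heat kernel:** for every `T > 0` there is
`C_T > 0` such that `|log p_𝕋(t,y) − log p_𝕋(t,y−x)| ≤ C_T |x| / t` for all
`t ∈ (0,T]` and `x, y ∈ ℝ`. -/
theorem heatKernelTorus_log_lipschitz (T : ℝ) (hT : 0 < T) :
    ∃ C : ℝ, 0 < C ∧ ∀ t : ℝ, t ∈ Set.Ioc 0 T → ∀ x y : ℝ,
      |Real.log (heatKernelTorus t y) - Real.log (heatKernelTorus t (y - x))|
        ≤ C * |x| / t := by
  refine ⟨HKAux.Cc T, HKAux.Cc_pos hT, fun t ht x y => ?_⟩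
  obtain ⟨ht0, htT⟩ := ht
  have h1 : Real.log (heatKernelTorus t y) - Real.log (heatKernelTorus t (y - x))
      = Real.log (HKAux.S t y) - Real.log (HKAux.S t (y - x)) := by
    rw [HKAux.log_hk hT ht0 htT, HKAux.log_hk hT ht0 htT]; ring
  rw [h1]
  have hmvt := Convex.norm_image_sub_le_of_norm_hasDerivWithin_le
    (f := fun z => Real.log (HKAux.S t z)) (f' := HKAux.phi t) (s := Set.univ)
    (C := HKAux.Cc T / t)
    (fun z _ => (HKAux.hasDerivAt_logS hT ht0 htT z).hasDerivWithinAt)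
    (fun z _ => HKAux.phi_bound hT ht0 htT z) convex_univ (Set.mem_univ (y - x))
    (Set.mem_univ y)
  have h2 : y - (y - x) = x := by ring
  rw [h2] at hmvt
  calc |Real.log (HKAux.S t y) - Real.log (HKAux.S t (y - x))| ≤ HKAux.Cc T / t * |x| := hmvt
    _ = HKAux.Cc T * |x| / t := by ring
end

section
/- For every T > 0 there exists a constant C_T > 0, independent of the initial condition, with the following property. Let h̄ : ℝ → ℝ be continuous and 2π-periodic, and define w(t, x) = ∫_{−π}^{π} p_𝕋(t, x − y) · exp(h̄(y)) dy and h(t, x) = log w(t, x). Then for all t ∈ (0, T] and x ∈ ℝ: | h(t, x) − h(t, 0) | ≤ C_T · (1 + 1/t) · |x|. -/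
open Real

lemma summable_exp_lin_quad (a b : ℝ) (hb : 0 < b) :
    Summable fun k : ℤ => Real.exp (a * |(k : ℝ)| - b * (k : ℝ) ^ 2) := by
  have hnat : Summable fun n : ℕ => Real.exp (a * (n : ℝ) - b * (n : ℝ) ^ 2) := by
    have hgeo : Summable fun n : ℕ => Real.exp ((a + 1) ^ 2 / (4 * b)) * Real.exp (-1) ^ n :=
      (summable_geometric_of_lt_one (le_of_lt (Real.exp_pos _))
        (by rw [Real.exp_lt_one_iff]; norm_num)).mul_left _
    refine Summable.of_nonneg_of_le (fun n => (Real.exp_pos _).le) (fun n => ?_) hgeo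
    set v : ℝ := (n : ℝ) with hvdef
    have hv0 : 0 ≤ v := Nat.cast_nonneg _
    have h4b : (a + 1) ^ 2 / (4 * b) * (4 * b) = (a + 1) ^ 2 :=
      div_mul_cancel₀ _ (by positivity)
    rw [← Real.exp_nat_mul, ← Real.exp_add, Real.exp_le_exp]
    have h1 : (n : ℝ) * (-1) = -v := by ring
    rw [h1]
    nlinarith [sq_nonneg (2 * b * v - (a + 1)), hb, hv0, h4b]
  refine Summable.of_nat_of_neg ?_ ?_ <;>
    · refine hnat.congr fun n => ?_
      congr 2 <;> push_cast <;> simp [abs_of_nonneg, Nat.cast_nonneg]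

lemma summable_hk (t z : ℝ) (ht : 0 < t) :
    Summable fun k : ℤ => Real.exp (-(z + 2 * π * k) ^ 2 / (2 * t)) := by
  refine Summable.of_nonneg_of_le (fun k => (Real.exp_pos _).le) (fun k => ?_)
    (summable_exp_lin_quad (2 * π * |z| / t) (2 * π ^ 2 / t) (by positivity))
  rw [Real.exp_le_exp, div_le_iff₀ (show (0:ℝ) < 2 * t by positivity)]
  have h2 : (2 * π * |z| / t * |(k:ℝ)| - 2 * π ^ 2 / t * (k:ℝ) ^ 2) * (2 * t) =
      4 * π * (|z| * |(k:ℝ)|) - 4 * π ^ 2 * (k:ℝ) ^ 2 := by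
    field_simp; ring
  rw [h2]
  have h3 : -(z * (k:ℝ)) ≤ |z| * |(k:ℝ)| := by
    rw [← abs_mul]; exact neg_le_abs _
  nlinarith [mul_le_mul_of_nonneg_left h3 (by positivity : (0:ℝ) ≤ 4 * π), sq_nonneg z]

lemma hk_eq (t y : ℝ) :
    heatKernelTorus t y = 2 * π * (Real.sqrt (2 * π * t))⁻¹ *
      ∑' k : ℤ, Real.exp (-(y + 2 * π * k) ^ 2 / (2 * t)) := by
  rw [heatKernelTorus, tsum_mul_left]; ring

lemma hk_pos (t y : ℝ) (ht : 0 < t) : 0 < heatKernelTorus t y := by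
  rw [hk_eq]
  have h1 : 0 < (Real.sqrt (2 * π * t))⁻¹ := by
    rw [inv_pos]; exact Real.sqrt_pos.2 (by positivity)
  have h2 : 0 < ∑' k : ℤ, Real.exp (-(y + 2 * π * k) ^ 2 / (2 * t)) :=
    Summable.tsum_pos (summable_hk t y ht) (fun k => (Real.exp_pos _).le) 0 (Real.exp_pos _)
  positivity

noncomputable def kpzK (T : ℝ) : ℝ :=
  3 * π + Real.exp 1 * Real.sqrt (24 * T) * ∑' k : ℤ, Real.exp (-(k : ℝ) ^ 2 / (3 * T))

lemma summable_E (T : ℝ) (hT : 0 < T) :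
    Summable fun k : ℤ => Real.exp (-(k : ℝ) ^ 2 / (3 * T)) := by
  have := summable_exp_lin_quad 0 (1 / (3 * T)) (by positivity)
  refine this.congr fun k => ?_
  congr 1
  field_simp; ring

lemma kpzK_pos (T : ℝ) (hT : 0 < T) : 0 < kpzK T := by
  have h1 : 0 ≤ ∑' k : ℤ, Real.exp (-(k : ℝ) ^ 2 / (3 * T)) :=
    tsum_nonneg fun k => (Real.exp_pos _).le
  have h2 : (0:ℝ) ≤ Real.exp 1 * Real.sqrt (24 * T) := by positivity
  have := pi_pos
  unfold kpzK; nlinarith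

lemma aux_vexp (v : ℝ) : v * Real.exp (-v ^ 2) ≤ Real.exp 1 := by
  have hvex : v ≤ Real.exp v := by linarith [Real.add_one_le_exp v]
  have h5 : v * Real.exp (-v ^ 2) ≤ Real.exp v * Real.exp (-v ^ 2) :=
    mul_le_mul_of_nonneg_right hvex (Real.exp_pos _).le
  rw [← Real.exp_add] at h5
  have h6 : Real.exp (v + -v ^ 2) ≤ Real.exp 1 := by
    rw [Real.exp_le_exp]; nlinarith [sq_nonneg (v - 1 / 2)]
  linarith

lemma aux_far (z u kr : ℝ) (hz : |z| ≤ π) (hk2 : 2 ≤ |kr|) (hu : u = z + 2 * π * kr) :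
    3 * π ≤ |u| ∧ 9 * kr ^ 2 ≤ u ^ 2 ∧ 6 * z ^ 2 ≤ u ^ 2 := by
  have hπ := pi_gt_three
  have h1 : |2 * π * kr| ≤ |u| + |z| := by
    have he : 2 * π * kr = u + -z := by rw [hu]; ring
    rw [he]
    exact (abs_add_le u (-z)).trans (by rw [abs_neg])
  have h2 : |2 * π * kr| = 2 * π * |kr| := by
    rw [abs_mul, abs_of_nonneg (by positivity : (0:ℝ) ≤ 2 * π)]
  have hu0 : (0:ℝ) ≤ |u| := abs_nonneg u
  have hk0 : (0:ℝ) ≤ |kr| := abs_nonneg kr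
  have hulb : 3 * π ≤ |u| := by nlinarith
  have hπk : π * |kr| ≤ |u| := by nlinarith
  refine ⟨hulb, ?_, ?_⟩
  · have e1 : (π * |kr|) * (π * |kr|) ≤ |u| * |u| :=
      mul_self_le_mul_self (by positivity) hπk
    have e2 : (0:ℝ) ≤ (π * π - 9) * (kr * kr) :=
      mul_nonneg (by nlinarith) (mul_self_nonneg kr)
    nlinarith [sq_abs u, sq_abs kr]
  · have e1 : (3 * π) * (3 * π) ≤ |u| * |u| :=
      mul_self_le_mul_self (by positivity) hulb
    have e2 : |z| * |z| ≤ π * π :=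
      mul_self_le_mul_self (abs_nonneg z) hz
    nlinarith [sq_abs u, sq_abs z]

lemma aux_div_f2 (a b c : ℝ) (hc : 0 < c) (ha : 0 ≤ a) (h : 9 * a ≤ b) :
    -b / (24 * c) ≤ -a / (3 * c) := by
  rw [neg_div, neg_div, neg_le_neg_iff,
    div_le_div_iff₀ (by positivity) (by positivity)]
  nlinarith [mul_le_mul_of_nonneg_right h hc.le, mul_nonneg ha hc.le]

lemma aux_div_fz (a b c : ℝ) (hc : 0 < c) (h : 6 * a ≤ b) : -b / (12 * c) ≤ -a / (2 * c) := by
  rw [neg_div, neg_div, neg_le_neg_iff,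
    div_le_div_iff₀ (by positivity) (by positivity)]
  nlinarith [mul_le_mul_of_nonneg_right h hc.le]

/-- Per-term key estimate. -/
lemma hk_term_key (T t z x : ℝ) (hT : 0 < T) (ht : 0 < t) (htT : t ≤ T)
    (hz : |z| ≤ π) (hx : |x| ≤ π) (k : ℤ) :
    Real.exp (-(z + x + 2 * π * k) ^ 2 / (2 * t)) ≤
      Real.exp (3 * π * |x| / t) * Real.exp (-(z + 2 * π * k) ^ 2 / (2 * t)) +
      (|x| / t * (Real.exp 1 * Real.sqrt (24 * T)) * Real.exp (-z ^ 2 / (2 * t))) *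
        Real.exp (-(k : ℝ) ^ 2 / (3 * T)) := by
  have hπ := pi_gt_three
  obtain ⟨u, hu⟩ : ∃ u : ℝ, u = z + 2 * π * k := ⟨_, rfl⟩
  have hzu : z + x + 2 * π * (k:ℝ) = u + x := by rw [hu]; ring
  rw [hzu, ← hu]
  have hu0 : (0:ℝ) ≤ |u| := abs_nonneg u
  have step1 : Real.exp (-(u + x) ^ 2 / (2 * t)) ≤
      Real.exp (|x| * |u| / t) * Real.exp (-u ^ 2 / (2 * t)) := by
    rw [← Real.exp_add, Real.exp_le_exp]
    have heq : |x| * |u| / t + -u ^ 2 / (2 * t) = (2 * (|x| * |u|) - u ^ 2) / (2 * t) := by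
      field_simp; ring
    rw [heq, div_le_div_iff_of_pos_right (by positivity : (0:ℝ) < 2 * t)]
    nlinarith [neg_le_abs (x * u), abs_mul x u, sq_nonneg x]
  by_cases hk : |(k : ℝ)| ≤ 1
  · -- near terms
    have hub : |u| ≤ 3 * π := by
      calc |u| ≤ |z| + |2 * π * k| := by rw [hu]; exact abs_add_le _ _
        _ = |z| + 2 * π * |(k:ℝ)| := by
            rw [abs_mul, abs_of_nonneg (by positivity : (0:ℝ) ≤ 2 * π)]
        _ ≤ 3 * π := by nlinarith [pi_pos]
    have h2 : Real.exp (|x| * |u| / t) ≤ Real.exp (3 * π * |x| / t) := by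
      rw [Real.exp_le_exp, div_le_div_iff_of_pos_right ht]
      nlinarith [abs_nonneg x, abs_nonneg u]
    have hpos : (0:ℝ) ≤ (|x| / t * (Real.exp 1 * Real.sqrt (24 * T)) *
        Real.exp (-z ^ 2 / (2 * t))) * Real.exp (-(k : ℝ) ^ 2 / (3 * T)) := by positivity
    nlinarith [step1, mul_le_mul_of_nonneg_right h2 (Real.exp_pos (-u ^ 2 / (2 * t))).le]
  · -- far terms, |k| ≥ 2
    push_neg at hk
    have hk2 : (2:ℝ) ≤ |(k:ℝ)| := by
      rw [← Int.cast_abs] at hk ⊢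
      have h1 : (1:ℤ) < |k| := by exact_mod_cast hk
      exact_mod_cast h1
    have hT' : (0:ℝ) < 24 * T := by positivity
    have hu_lb : 3 * π ≤ |u| := (aux_far z u (k:ℝ) hz hk2 hu).1
    obtain ⟨s, hs_def⟩ : ∃ s : ℝ, s = |x| * |u| / t := ⟨_, rfl⟩
    have hs0 : 0 ≤ s := by rw [hs_def]; positivity
    have hA : (1:ℝ) ≤ Real.exp (3 * π * |x| / t) :=
      Real.one_le_exp (by positivity)
    have step2 : Real.exp s ≤ 1 + s * Real.exp s := by
      have e1 : (-s + 1) * Real.exp s ≤ Real.exp (-s) * Real.exp s :=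
        mul_le_mul_of_nonneg_right (Real.add_one_le_exp (-s)) (Real.exp_pos _).le
      rw [← Real.exp_add, neg_add_cancel, Real.exp_zero] at e1
      nlinarith [Real.exp_pos s]
    have hEs : Real.exp s ≤ Real.exp (π * |u| / t) := by
      rw [hs_def, Real.exp_le_exp, div_le_div_iff_of_pos_right ht]
      nlinarith [abs_nonneg x, abs_nonneg u, pi_pos]
    have hG : Real.exp (π * |u| / t) * Real.exp (-u ^ 2 / (2 * t)) ≤
        Real.exp (-u ^ 2 / (6 * t)) := by
      rw [← Real.exp_add, Real.exp_le_exp]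
      have he : π * |u| / t + -u ^ 2 / (2 * t) = (6 * (π * |u|) - 3 * u ^ 2) / (6 * t) := by
        field_simp; ring
      rw [he, div_le_div_iff_of_pos_right (by positivity : (0:ℝ) < 6 * t)]
      nlinarith [mul_le_mul_of_nonneg_right hu_lb hu0, sq_abs u]
    have ht12 : u ^ 2 / (12 * T) ≤ u ^ 2 / (12 * t) := by
      rw [div_le_div_iff₀ (by positivity : (0:ℝ) < 12 * T) (by positivity : (0:ℝ) < 12 * t)]
      linarith [mul_le_mul_of_nonneg_left htT (sq_nonneg u)]
    have f3 : Real.exp (-u ^ 2 / (6 * t)) ≤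
        Real.exp (-u ^ 2 / (24 * T)) * (Real.exp (-u ^ 2 / (24 * T)) *
          Real.exp (-u ^ 2 / (12 * t))) := by
      rw [← Real.exp_add, ← Real.exp_add, Real.exp_le_exp]
      have e1 : -u ^ 2 / (6 * t) = -(u ^ 2 / (12 * t)) + -(u ^ 2 / (12 * t)) := by ring
      have e2 : -u ^ 2 / (24 * T) + (-u ^ 2 / (24 * T) + -u ^ 2 / (12 * t)) =
          -(u ^ 2 / (12 * T)) + -(u ^ 2 / (12 * t)) := by ring
      rw [e1, e2]
      linarith
    have hc : (0:ℝ) < Real.sqrt (24 * T) := Real.sqrt_pos.2 hT'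
    have hc2 : Real.sqrt (24 * T) ^ 2 = 24 * T := Real.sq_sqrt hT'.le
    have f1 : |u| * Real.exp (-u ^ 2 / (24 * T)) ≤ Real.exp 1 * Real.sqrt (24 * T) := by
      obtain ⟨c, hcd⟩ : ∃ c : ℝ, c = Real.sqrt (24 * T) := ⟨_, rfl⟩
      rw [← hcd] at hc hc2 ⊢
      obtain ⟨v, hvd⟩ : ∃ v : ℝ, v = |u| / c := ⟨_, rfl⟩
      have huv : |u| = c * v := by rw [hvd]; field_simp
      have hv2 : -u ^ 2 / (24 * T) = -v ^ 2 := by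
        rw [hvd, div_pow, hc2, neg_div, ← sq_abs u]
      rw [hv2, huv]
      calc c * v * Real.exp (-v ^ 2) = c * (v * Real.exp (-v ^ 2)) := by ring
        _ ≤ c * Real.exp 1 := mul_le_mul_of_nonneg_left (aux_vexp v) hc.le
        _ = Real.exp 1 * c := by ring
    obtain ⟨-, hu9, hz6⟩ := aux_far z u (k:ℝ) hz hk2 hu
    have f2 : Real.exp (-u ^ 2 / (24 * T)) ≤ Real.exp (-(k:ℝ) ^ 2 / (3 * T)) := by
      rw [Real.exp_le_exp]
      exact aux_div_f2 _ _ _ hT (sq_nonneg _) hu9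
    have fz : Real.exp (-u ^ 2 / (12 * t)) ≤ Real.exp (-z ^ 2 / (2 * t)) := by
      rw [Real.exp_le_exp]
      exact aux_div_fz _ _ _ ht hz6
    have hE1 := (Real.exp_pos (-u ^ 2 / (2 * t))).le
    have hmid : Real.exp s * Real.exp (-u ^ 2 / (2 * t)) ≤
        Real.exp (-u ^ 2 / (24 * T)) * (Real.exp (-u ^ 2 / (24 * T)) *
          Real.exp (-u ^ 2 / (12 * t))) :=
      (mul_le_mul_of_nonneg_right hEs hE1).trans (hG.trans f3)
    have hstep1' : Real.exp (-(u + x) ^ 2 / (2 * t)) ≤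
        Real.exp s * Real.exp (-u ^ 2 / (2 * t)) := by rw [hs_def]; exact step1
    calc Real.exp (-(u + x) ^ 2 / (2 * t))
        ≤ Real.exp s * Real.exp (-u ^ 2 / (2 * t)) := hstep1'
      _ ≤ (1 + s * Real.exp s) * Real.exp (-u ^ 2 / (2 * t)) :=
          mul_le_mul_of_nonneg_right step2 hE1
      _ = Real.exp (-u ^ 2 / (2 * t)) + s * (Real.exp s * Real.exp (-u ^ 2 / (2 * t))) := by
          ring
      _ ≤ Real.exp (3 * π * |x| / t) * Real.exp (-u ^ 2 / (2 * t)) +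
          s * (Real.exp (-u ^ 2 / (24 * T)) * (Real.exp (-u ^ 2 / (24 * T)) *
            Real.exp (-u ^ 2 / (12 * t)))) := by
          have b1 : Real.exp (-u ^ 2 / (2 * t)) ≤
              Real.exp (3 * π * |x| / t) * Real.exp (-u ^ 2 / (2 * t)) :=
            le_mul_of_one_le_left (Real.exp_pos _).le hA
          have b2 := mul_le_mul_of_nonneg_left hmid hs0
          linarith
      _ = Real.exp (3 * π * |x| / t) * Real.exp (-u ^ 2 / (2 * t)) +
          |x| / t * ((|u| * Real.exp (-u ^ 2 / (24 * T))) * (Real.exp (-u ^ 2 / (24 * T)) *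
            Real.exp (-u ^ 2 / (12 * t)))) := by
          rw [hs_def]; ring
      _ ≤ Real.exp (3 * π * |x| / t) * Real.exp (-u ^ 2 / (2 * t)) +
          |x| / t * ((Real.exp 1 * Real.sqrt (24 * T)) * (Real.exp (-(k:ℝ) ^ 2 / (3 * T)) *
            Real.exp (-z ^ 2 / (2 * t)))) := by
          have c1 : (|u| * Real.exp (-u ^ 2 / (24 * T))) * (Real.exp (-u ^ 2 / (24 * T)) *
              Real.exp (-u ^ 2 / (12 * t))) ≤
              (Real.exp 1 * Real.sqrt (24 * T)) * (Real.exp (-(k:ℝ) ^ 2 / (3 * T)) *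
                Real.exp (-z ^ 2 / (2 * t))) := by
            apply mul_le_mul f1 (mul_le_mul f2 fz (Real.exp_pos _).le (Real.exp_pos _).le)
              (by positivity) (by positivity)
          have c2 := mul_le_mul_of_nonneg_left c1 (by positivity : (0:ℝ) ≤ |x| / t)
          linarith
      _ = Real.exp (3 * π * |x| / t) * Real.exp (-u ^ 2 / (2 * t)) +
          (|x| / t * (Real.exp 1 * Real.sqrt (24 * T)) * Real.exp (-z ^ 2 / (2 * t))) *
            Real.exp (-(k:ℝ) ^ 2 / (3 * T)) := by ring

lemma exp_add_le (a c : ℝ) (ha : 0 ≤ a) (hc : 0 ≤ c) :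
    Real.exp a + c ≤ Real.exp (a + c) := by
  have h1 : 1 + c ≤ Real.exp c := by linarith [Real.add_one_le_exp c]
  have h2 : 1 ≤ Real.exp a := Real.one_le_exp ha
  have h3 : Real.exp a * (1 + c) ≤ Real.exp a * Real.exp c :=
    mul_le_mul_of_nonneg_left h1 (Real.exp_pos a).le
  rw [← Real.exp_add] at h3
  nlinarith [Real.exp_pos a]

lemma hk_core (T t z x : ℝ) (hT : 0 < T) (ht : 0 < t) (htT : t ≤ T)
    (hz : |z| ≤ π) (hx : |x| ≤ π) :
    heatKernelTorus t (z + x) ≤ Real.exp (kpzK T * |x| / t) * heatKernelTorus t z := by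
  have hB : Summable fun k : ℤ => Real.exp (-(k : ℝ) ^ 2 / (3 * T)) := summable_E T hT
  have hSz := summable_hk t z ht
  have hSzx := summable_hk t (z + x) ht
  set D : ℝ := Real.exp 1 * Real.sqrt (24 * T) with hD_def
  have hD : 0 ≤ D := by rw [hD_def]; positivity
  set B : ℝ := ∑' k : ℤ, Real.exp (-(k : ℝ) ^ 2 / (3 * T)) with hB_def
  have hBnn : 0 ≤ B := tsum_nonneg fun k => (Real.exp_pos _).le
  set Cst : ℝ := |x| / t * D * Real.exp (-z ^ 2 / (2 * t)) with hC_def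
  have hsum : (∑' k : ℤ, Real.exp (-(z + x + 2 * π * k) ^ 2 / (2 * t))) ≤
      ∑' k : ℤ, (Real.exp (3 * π * |x| / t) * Real.exp (-(z + 2 * π * k) ^ 2 / (2 * t)) +
        Cst * Real.exp (-(k : ℝ) ^ 2 / (3 * T))) := by
    apply Summable.tsum_le_tsum (fun k => hk_term_key T t z x hT ht htT hz hx k) hSzx
    exact (hSz.mul_left _).add (hB.mul_left _)
  rw [Summable.tsum_add (hSz.mul_left _) (hB.mul_left _), tsum_mul_left, tsum_mul_left, ← hB_def]
    at hsum
  have hE0 : Real.exp (-z ^ 2 / (2 * t)) ≤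
      ∑' k : ℤ, Real.exp (-(z + 2 * π * k) ^ 2 / (2 * t)) := by
    have := Summable.le_tsum hSz 0 (fun j _ => (Real.exp_pos _).le)
    simpa using this
  set Sz : ℝ := ∑' k : ℤ, Real.exp (-(z + 2 * π * k) ^ 2 / (2 * t)) with hSz_def
  have hSznn : 0 ≤ Sz := tsum_nonneg fun k => (Real.exp_pos _).le
  have h2 : (∑' k : ℤ, Real.exp (-(z + x + 2 * π * k) ^ 2 / (2 * t))) ≤
      (Real.exp (3 * π * |x| / t) + D * B * (|x| / t)) * Sz := by
    have hCB : Cst * B ≤ D * B * (|x| / t) * Sz := by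
      have h3 : Cst * B = |x| / t * D * B * Real.exp (-z ^ 2 / (2 * t)) := by
        rw [hC_def]; ring
      rw [h3]
      have h4 : |x| / t * D * B * Real.exp (-z ^ 2 / (2 * t)) ≤ |x| / t * D * B * Sz := by
        apply mul_le_mul_of_nonneg_left hE0
        positivity
      calc |x| / t * D * B * Real.exp (-z ^ 2 / (2 * t)) ≤ |x| / t * D * B * Sz := h4
        _ = D * B * (|x| / t) * Sz := by ring
    calc (∑' k : ℤ, Real.exp (-(z + x + 2 * π * k) ^ 2 / (2 * t)))
        ≤ Real.exp (3 * π * |x| / t) * Sz + Cst * B := hsum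
      _ ≤ Real.exp (3 * π * |x| / t) * Sz + D * B * (|x| / t) * Sz := by linarith
      _ = (Real.exp (3 * π * |x| / t) + D * B * (|x| / t)) * Sz := by ring
  have h5 : Real.exp (3 * π * |x| / t) + D * B * (|x| / t) ≤
      Real.exp (kpzK T * |x| / t) := by
    have heq : kpzK T * |x| / t = 3 * π * |x| / t + D * B * (|x| / t) := by
      rw [kpzK, ← hB_def, ← hD_def]; ring
    rw [heq]
    exact exp_add_le _ _ (by positivity) (by positivity)
  have h6 : (∑' k : ℤ, Real.exp (-(z + x + 2 * π * k) ^ 2 / (2 * t))) ≤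
      Real.exp (kpzK T * |x| / t) * Sz :=
    h2.trans (mul_le_mul_of_nonneg_right h5 hSznn)
  rw [hk_eq, hk_eq]
  have hF : (0:ℝ) ≤ 2 * π * (Real.sqrt (2 * π * t))⁻¹ := by positivity
  have hzx : ∀ k : ℤ, (z + x + 2 * π * k : ℝ) = (z + x) + 2 * π * k := fun k => by ring
  calc 2 * π * (Real.sqrt (2 * π * t))⁻¹ *
        ∑' k : ℤ, Real.exp (-(z + x + 2 * π * k) ^ 2 / (2 * t))
      ≤ 2 * π * (Real.sqrt (2 * π * t))⁻¹ * (Real.exp (kpzK T * |x| / t) * Sz) :=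
        mul_le_mul_of_nonneg_left h6 hF
    _ = Real.exp (kpzK T * |x| / t) *
        (2 * π * (Real.sqrt (2 * π * t))⁻¹ * Sz) := by ring

lemma hk_ratio (T t z x : ℝ) (hT : 0 < T) (ht : 0 < t) (htT : t ≤ T) :
    heatKernelTorus t (z + x) ≤
      Real.exp (kpzK T * ((1 + 1 / t) * min |x| π) ) * heatKernelTorus t z := by
  have h2π : (0:ℝ) < 2 * π := by positivity
  set m : ℤ := round (z / (2 * π)) with hm_def
  set n : ℤ := round (x / (2 * π)) with hn_def
  have key : ∀ w : ℝ, |w - 2 * π * round (w / (2 * π))| ≤ π := by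
    intro w
    have h := abs_sub_round (w / (2 * π))
    have he : w - 2 * π * round (w / (2 * π)) =
        (2 * π) * (w / (2 * π) - round (w / (2 * π))) := by
      field_simp
    rw [he, abs_mul, abs_of_pos h2π]
    nlinarith [h]
  have hz' : |z - 2 * π * m| ≤ π := key z
  have hx' : |x - 2 * π * n| ≤ π := key x
  have hxx' : |x - 2 * π * n| ≤ |x| := by
    by_cases hcase : |x| < π
    · have hn0 : n = 0 := by
        rw [hn_def, round_eq_zero_iff]
        obtain ⟨h1, h2⟩ := abs_lt.1 hcase
        constructor
        · rw [le_div_iff₀ h2π]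
          nlinarith
        · rw [div_lt_iff₀ h2π]
          nlinarith
      simp [hn0]
    · push_neg at hcase
      exact hx'.trans hcase
  have hmin : |x - 2 * π * n| ≤ min |x| π := le_min hxx' hx'
  have e1 : heatKernelTorus t ((z - 2 * π * m) + (x - 2 * π * n)) =
      heatKernelTorus t (z + x) := by
    have h := (hk_periodic t).sub_int_mul_eq (x := z + x) (m + n)
    have he : z + x - (↑(m + n)) * (2 * π) = (z - 2 * π * m) + (x - 2 * π * n) := by
      push_cast; ring
    rw [he] at h
    exact h
  have e2 : heatKernelTorus t (z - 2 * π * m) = heatKernelTorus t z := by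
    have h := (hk_periodic t).sub_int_mul_eq (x := z) m
    have he : z - (m : ℝ) * (2 * π) = z - 2 * π * m := by ring
    rw [he] at h
    exact h
  have hcore := hk_core T t (z - 2 * π * m) (x - 2 * π * n) hT ht htT hz' hx'
  rw [e1, e2] at hcore
  refine hcore.trans (mul_le_mul_of_nonneg_right ?_ (hk_pos t z ht).le)
  rw [Real.exp_le_exp]
  have hK := (kpzK_pos T hT).le
  have hmm : |x - 2 * π * n| * (1 / t) ≤ (1 + 1 / t) * min |x| π := by
    have h1 : |x - 2 * π * n| * (1 / t) ≤ min |x| π * (1 + 1 / t) :=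
      mul_le_mul hmin (by linarith : (1:ℝ) / t ≤ 1 + 1 / t) (by positivity)
        (le_min (abs_nonneg x) pi_pos.le)
    linarith [h1]
  calc kpzK T * |x - 2 * π * n| / t = kpzK T * (|x - 2 * π * n| * (1 / t)) := by ring
    _ ≤ kpzK T * ((1 + 1 / t) * min |x| π) := mul_le_mul_of_nonneg_left hmm hK

lemma exp_bound_aux (t R y : ℝ) (ht : 0 < t) (hy : |y| ≤ R) (k : ℤ) :
    Real.exp (-(y + 2 * π * k) ^ 2 / (2 * t)) ≤
      Real.exp (2 * π * R / t * |(k : ℝ)| - 2 * π ^ 2 / t * (k : ℝ) ^ 2) := by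
  rw [Real.exp_le_exp, div_le_iff₀ (show (0:ℝ) < 2 * t by positivity)]
  have h2 : (2 * π * R / t * |(k:ℝ)| - 2 * π ^ 2 / t * (k:ℝ) ^ 2) * (2 * t) =
      4 * π * (R * |(k:ℝ)|) - 4 * π ^ 2 * (k:ℝ) ^ 2 := by
    field_simp; ring
  rw [h2]
  have h3 : -(y * (k:ℝ)) ≤ |y| * |(k:ℝ)| := by
    rw [← abs_mul]; exact neg_le_abs _
  have h4 : |y| * |(k:ℝ)| ≤ R * |(k:ℝ)| :=
    mul_le_mul_of_nonneg_right hy (abs_nonneg _)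
  have h5 : -(y * (k:ℝ)) ≤ R * |(k:ℝ)| := h3.trans h4
  nlinarith [mul_le_mul_of_nonneg_left h5 (by positivity : (0:ℝ) ≤ 4 * π), sq_nonneg y]

lemma hk_continuous (t : ℝ) (ht : 0 < t) : Continuous fun y => heatKernelTorus t y := by
  have hS : Continuous fun y => ∑' k : ℤ, Real.exp (-(y + 2 * π * k) ^ 2 / (2 * t)) := by
    rw [continuous_iff_continuousAt]
    intro y₀
    apply ContinuousOn.continuousAt (s := Metric.ball y₀ 1) _ (Metric.ball_mem_nhds y₀ one_pos)
    apply continuousOn_tsum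
      (u := fun k : ℤ => Real.exp (2 * π * (|y₀| + 1) / t * |(k : ℝ)| -
        2 * π ^ 2 / t * (k : ℝ) ^ 2))
    · intro k
      apply Continuous.continuousOn
      continuity
    · exact (summable_exp_lin_quad _ _ (by positivity)).congr fun k => rfl
    · intro k y hy
      rw [Real.norm_eq_abs, abs_of_pos (Real.exp_pos _)]
      apply exp_bound_aux t _ y ht _ k
      have := Metric.mem_ball.1 hy
      rw [Real.dist_eq] at this
      calc |y| = |y₀ + (y - y₀)| := by ring_nf
        _ ≤ |y₀| + |y - y₀| := abs_add_le _ _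
        _ ≤ |y₀| + 1 := by linarith [abs_sub_comm y y₀ ▸ this.le]
  have he : (fun y => heatKernelTorus t y) = fun y =>
      2 * π * (Real.sqrt (2 * π * t))⁻¹ *
        ∑' k : ℤ, Real.exp (-(y + 2 * π * k) ^ 2 / (2 * t)) := by
    funext y; exact hk_eq t y
  rw [he]
  exact continuous_const.mul hS

/-- **Oscillation bound for KPZ without forcing.** For every `T > 0` there is
`C_T > 0`, independent of the initial condition, such that for every continuous
`2π`-periodic `h̄`, the Cole–Hopf solution `h(t,x) = log ∫_{−π}^{π} p_𝕋(t,x−y) e^{h̄(y)} dy`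
of the forcing-free KPZ equation satisfies
`|h(t,x) − h(t,0)| ≤ C_T (1 + 1/t) |x|` for all `t ∈ (0,T]` and `x ∈ ℝ`. -/
theorem kpz_no_forcing_oscillation (T : ℝ) (hT : 0 < T) :
    ∃ C : ℝ, 0 < C ∧
      ∀ hbar : ℝ → ℝ, Continuous hbar → Function.Periodic hbar (2 * π) →
      ∀ h : ℝ → ℝ → ℝ,
        (∀ t x, h t x =
          Real.log (∫ y in (-π)..π, heatKernelTorus t (x - y) * Real.exp (hbar y))) →
      ∀ t : ℝ, t ∈ Set.Ioc 0 T → ∀ x : ℝ,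
        |h t x - h t 0| ≤ C * (1 + 1 / t) * |x| := by
  refine ⟨kpzK T, kpzK_pos T hT, ?_⟩
  intro hbar hcont _hper h hdef t htmem x
  obtain ⟨ht0, htT⟩ := htmem
  -- the integrand and its properties
  have hcontint : ∀ a : ℝ, Continuous fun y => heatKernelTorus t (a - y) * Real.exp (hbar y) :=
    fun a => ((hk_continuous t ht0).comp (continuous_const.sub continuous_id)).mul
      (Real.continuous_exp.comp hcont)
  have hInt : ∀ a : ℝ, IntervalIntegrable
      (fun y => heatKernelTorus t (a - y) * Real.exp (hbar y)) MeasureTheory.volume (-π) π :=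
    fun a => (hcontint a).intervalIntegrable _ _
  have hwpos : ∀ a : ℝ, 0 < ∫ y in (-π)..π, heatKernelTorus t (a - y) * Real.exp (hbar y) := by
    intro a
    apply intervalIntegral.intervalIntegral_pos_of_pos_on (hInt a)
    · intro y _
      exact mul_pos (hk_pos t (a - y) ht0) (Real.exp_pos _)
    · linarith [pi_pos]
  set E : ℝ := Real.exp (kpzK T * ((1 + 1 / t) * min |x| π)) with hE_def
  -- w x ≤ E * w 0
  have hle : (∫ y in (-π)..π, heatKernelTorus t (x - y) * Real.exp (hbar y)) ≤
      E * ∫ y in (-π)..π, heatKernelTorus t (0 - y) * Real.exp (hbar y) := by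
    rw [← intervalIntegral.integral_const_mul]
    apply intervalIntegral.integral_mono_on (by linarith [pi_pos]) (hInt x)
      ((hInt 0).const_mul E)
    intro y _
    have hr := hk_ratio T t (0 - y) x hT ht0 htT
    have he : (0 - y) + x = x - y := by ring
    rw [he] at hr
    calc heatKernelTorus t (x - y) * Real.exp (hbar y)
        ≤ (E * heatKernelTorus t (0 - y)) * Real.exp (hbar y) :=
          mul_le_mul_of_nonneg_right hr (Real.exp_pos _).le
      _ = E * (heatKernelTorus t (0 - y) * Real.exp (hbar y)) := by ring
  -- w 0 ≤ E * w x
  have hge : (∫ y in (-π)..π, heatKernelTorus t (0 - y) * Real.exp (hbar y)) ≤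
      E * ∫ y in (-π)..π, heatKernelTorus t (x - y) * Real.exp (hbar y) := by
    rw [← intervalIntegral.integral_const_mul]
    apply intervalIntegral.integral_mono_on (by linarith [pi_pos]) (hInt 0)
      ((hInt x).const_mul E)
    intro y _
    have hr := hk_ratio T t (x - y) (-x) hT ht0 htT
    have he : (x - y) + -x = 0 - y := by ring
    rw [he, abs_neg] at hr
    calc heatKernelTorus t (0 - y) * Real.exp (hbar y)
        ≤ (E * heatKernelTorus t (x - y)) * Real.exp (hbar y) :=
          mul_le_mul_of_nonneg_right hr (Real.exp_pos _).le
      _ = E * (heatKernelTorus t (x - y) * Real.exp (hbar y)) := by ring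
  have hwx := hwpos x
  have hw0 := hwpos 0
  have hlogE : Real.log E = kpzK T * ((1 + 1 / t) * min |x| π) := Real.log_exp _
  have hEbound : kpzK T * ((1 + 1 / t) * min |x| π) ≤ kpzK T * (1 + 1 / t) * |x| := by
    have h1 : min |x| π ≤ |x| := min_le_left _ _
    have h2 : (0:ℝ) ≤ kpzK T * (1 + 1 / t) := by
      have := (kpzK_pos T hT).le
      have h3 : (0:ℝ) ≤ 1 + 1 / t := by positivity
      positivity
    calc kpzK T * ((1 + 1 / t) * min |x| π) = (kpzK T * (1 + 1 / t)) * min |x| π := by ring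
      _ ≤ (kpzK T * (1 + 1 / t)) * |x| := mul_le_mul_of_nonneg_left h1 h2
  rw [hdef t x, hdef t 0, abs_sub_le_iff]
  constructor
  · have l1 : Real.log (∫ y in (-π)..π, heatKernelTorus t (x - y) * Real.exp (hbar y)) ≤
        Real.log (E * ∫ y in (-π)..π, heatKernelTorus t (0 - y) * Real.exp (hbar y)) :=
      (Real.log_le_log_iff hwx (by positivity)).2 hle
    rw [Real.log_mul (by positivity) hw0.ne', hlogE] at l1
    linarith
  · have l1 : Real.log (∫ y in (-π)..π, heatKernelTorus t (0 - y) * Real.exp (hbar y)) ≤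
        Real.log (E * ∫ y in (-π)..π, heatKernelTorus t (x - y) * Real.exp (hbar y)) :=
      (Real.log_le_log_iff hw0 (by positivity)).2 hge
    rw [Real.log_mul (by positivity) hwx.ne', hlogE] at l1
    linarith
end

section
/- For all 0 < τ < T there exists a constant C = C(τ, T) > 0, independent of the initial condition, with the following property. Let h̄ : ℝ → ℝ be continuous and 2π-periodic, define w(t, x) = ∫_{−π}^{π} p_𝕋(t, x − y) · exp(h̄(y)) dy and h(t, x) = log w(t, x). Then sup { |h(t, x) − h(s, y)| : τ ≤ s ≤ t ≤ T, x, y ∈ ℝ } ≤ C. -/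
open Real

namespace KPZAux

/-- key geometric estimate -/
lemma key_sq (y : ℝ) (hy : |y| ≤ π) (k : ℤ) :
    π ^ 2 * (k.natAbs : ℝ) ≤ (y + 2 * π * k) ^ 2 := by
  rcases eq_or_ne k 0 with rfl | hk
  · simp; positivity
  · have hn : (1 : ℝ) ≤ (k.natAbs : ℝ) := by
      exact_mod_cast Nat.one_le_iff_ne_zero.mpr (Int.natAbs_ne_zero.mpr hk)
    have hkabs : |(k : ℝ)| = (k.natAbs : ℝ) := by
      rw [Nat.cast_natAbs]; push_cast; ring
    have h1 : |2 * π * (k : ℝ)| ≤ |y + 2 * π * k| + |y| := by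
      calc |2 * π * (k : ℝ)| = |(y + 2 * π * k) - y| := by ring_nf
        _ ≤ |y + 2 * π * k| + |y| := abs_sub _ _
    have h2 : |2 * π * (k : ℝ)| = 2 * π * (k.natAbs : ℝ) := by
      rw [abs_mul, hkabs, abs_of_pos (by positivity : (0:ℝ) < 2 * π)]
    have h3 : π * (k.natAbs : ℝ) ≤ |y + 2 * π * k| := by
      rw [h2] at h1
      nlinarith [pi_pos]
    have h4 : (π * (k.natAbs : ℝ)) ^ 2 ≤ (y + 2 * π * k) ^ 2 := by
      rw [← sq_abs (y + 2 * π * k)]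
      exact pow_le_pow_left₀ (by positivity) h3 2
    nlinarith [pi_pos]

lemma term_le (s T : ℝ) (hs : 0 < s) (hsT : s ≤ T) {y : ℝ} (hy : |y| ≤ π) (k : ℤ) :
    Real.exp (-(y + 2 * π * k) ^ 2 / (2 * s)) ≤ (Real.exp (-π ^ 2 / (2 * T))) ^ k.natAbs := by
  have hT : 0 < T := hs.trans_le hsT
  rw [← Real.exp_nat_mul]
  rw [Real.exp_le_exp]
  have h1 : π ^ 2 * (k.natAbs : ℝ) / (2 * T) ≤ (y + 2 * π * k) ^ 2 / (2 * T) :=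
    div_le_div_of_nonneg_right (key_sq y hy k) (by positivity)
  have h2 : (y + 2 * π * k) ^ 2 / (2 * T) ≤ (y + 2 * π * k) ^ 2 / (2 * s) :=
    div_le_div_of_nonneg_left (by positivity) (by positivity) (by linarith)
  have h3 := h1.trans h2
  have h4 : (k.natAbs : ℝ) * (-π ^ 2 / (2 * T)) = -(π ^ 2 * (k.natAbs : ℝ) / (2 * T)) := by ring
  rw [h4, neg_div]
  linarith

lemma summable_geom_int {q : ℝ} (h0 : 0 ≤ q) (h1 : q < 1) :
    Summable (fun k : ℤ => q ^ k.natAbs) := by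
  apply Summable.of_nat_of_neg
  · simpa using summable_geometric_of_lt_one h0 h1
  · simpa using summable_geometric_of_lt_one h0 h1

lemma qlt (T : ℝ) (hT : 0 < T) : Real.exp (-π ^ 2 / (2 * T)) < 1 := by
  rw [Real.exp_lt_one_iff]
  have : (0:ℝ) < π ^ 2 / (2 * T) := by positivity
  rw [neg_div]; linarith

lemma summable_term_core (s : ℝ) (hs : 0 < s) {y : ℝ} (hy : |y| ≤ π) :
    Summable (fun k : ℤ => Real.exp (-(y + 2 * π * k) ^ 2 / (2 * s))) :=
  (summable_geom_int (Real.exp_nonneg _) (qlt s hs)).of_nonneg_of_le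
    (fun k => (Real.exp_pos _).le) (term_le s s hs le_rfl hy)

lemma reduce (y : ℝ) : ∃ k0 : ℤ, |y - 2 * π * k0| ≤ π := by
  refine ⟨round (y / (2 * π)), ?_⟩
  have h2π : (0:ℝ) < 2 * π := by positivity
  have h := abs_sub_round (y / (2 * π))
  have h5 : |(y / (2 * π) - round (y / (2 * π))) * (2 * π)| =
      |y / (2 * π) - round (y / (2 * π))| * (2 * π) := by
    rw [abs_mul, abs_of_pos h2π]
  have h6 : (y / (2 * π) - round (y / (2 * π))) * (2 * π)
      = y - 2 * π * round (y / (2 * π)) := by field_simp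
  have h7 : |y / (2 * π) - round (y / (2 * π))| * (2 * π) ≤ 1 / 2 * (2 * π) :=
    mul_le_mul_of_nonneg_right h h2π.le
  rw [h6] at h5
  rw [h5]
  linarith

lemma summable_term (s : ℝ) (hs : 0 < s) (y : ℝ) :
    Summable (fun k : ℤ => Real.exp (-(y + 2 * π * k) ^ 2 / (2 * s))) := by
  obtain ⟨k0, hk0⟩ := reduce y
  have hcore := summable_term_core s hs hk0
  have := hcore.comp_injective (Equiv.addRight k0).injective
  apply this.congr
  intro k
  simp only [Function.comp, Equiv.coe_addRight]
  congr 2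
  push_cast
  ring


lemma heat_eq (s y : ℝ) : heatKernelTorus s y =
    2 * π * ((Real.sqrt (2 * π * s))⁻¹ * ∑' k : ℤ, Real.exp (-(y + 2 * π * k) ^ 2 / (2 * s))) := by
  unfold heatKernelTorus
  rw [tsum_mul_left]

lemma periodic_heat (s : ℝ) : Function.Periodic (heatKernelTorus s) (2 * π) := by
  intro y
  unfold heatKernelTorus
  congr 1
  have h := (Equiv.addRight (1 : ℤ)).tsum_eq
    (fun k : ℤ => (Real.sqrt (2 * π * s))⁻¹ * Real.exp (-(y + 2 * π * k) ^ 2 / (2 * s)))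
  rw [← h]
  apply tsum_congr
  intro k
  simp only [Equiv.coe_addRight]
  congr 2
  push_cast
  ring

/-- reduction of the argument to `[-π, π]` -/
lemma heat_reduce (s y : ℝ) : ∃ y' : ℝ, |y'| ≤ π ∧ heatKernelTorus s y = heatKernelTorus s y' := by
  obtain ⟨k0, hk0⟩ := reduce y
  refine ⟨y - 2 * π * k0, hk0, ?_⟩
  have h1 : y - 2 * π * k0 = y - k0 * (2 * π) := by ring
  rw [h1, (periodic_heat s).sub_int_mul_eq k0]

lemma sqrt_inv_bounds {a b : ℝ} (ha : 0 < a) (hab : a ≤ b) :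
    (Real.sqrt (2 * π * b))⁻¹ ≤ (Real.sqrt (2 * π * a))⁻¹ := by
  have h1 : 0 < Real.sqrt (2 * π * a) := Real.sqrt_pos.mpr (by positivity)
  exact inv_anti₀ h1 (Real.sqrt_le_sqrt (by nlinarith [pi_pos]))

lemma heat_lower (τ T : ℝ) (hτ : 0 < τ) {s : ℝ} (hs1 : τ ≤ s) (hs2 : s ≤ T) (y : ℝ) :
    2 * π * ((Real.sqrt (2 * π * T))⁻¹ * Real.exp (-π ^ 2 / (2 * τ))) ≤ heatKernelTorus s y := by
  have hs : 0 < s := lt_of_lt_of_le hτ hs1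
  obtain ⟨y', hy', heq⟩ := heat_reduce s y
  rw [heq, heat_eq]
  have hsum := summable_term_core s hs hy'
  have h0 : Real.exp (-(y' + 2 * π * (0:ℤ)) ^ 2 / (2 * s))
      ≤ ∑' k : ℤ, Real.exp (-(y' + 2 * π * k) ^ 2 / (2 * s)) :=
    Summable.le_tsum hsum 0 (fun j _ => (Real.exp_pos _).le)
  have h1 : Real.exp (-π ^ 2 / (2 * τ)) ≤ Real.exp (-(y' + 2 * π * (0:ℤ)) ^ 2 / (2 * s)) := by
    rw [Real.exp_le_exp]
    push_cast
    have hy2 : (y' + 2 * π * 0) ^ 2 ≤ π ^ 2 := by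
      rw [mul_zero, add_zero, ← sq_abs]
      exact pow_le_pow_left₀ (abs_nonneg _) hy' 2
    have h2 : (y' + 2 * π * 0) ^ 2 / (2 * s) ≤ π ^ 2 / (2 * s) :=
      div_le_div_of_nonneg_right hy2 (by positivity)
    have h3 : π ^ 2 / (2 * s) ≤ π ^ 2 / (2 * τ) :=
      div_le_div_of_nonneg_left (by positivity) (by positivity) (by linarith)
    push_cast at h2 ⊢
    rw [neg_div, neg_div]
    linarith
  have hA : (Real.sqrt (2 * π * T))⁻¹ ≤ (Real.sqrt (2 * π * s))⁻¹ := sqrt_inv_bounds hs hs2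
  have hApos : (0:ℝ) < (Real.sqrt (2 * π * s))⁻¹ := by
    rw [inv_pos]; exact Real.sqrt_pos.mpr (by positivity)
  have hB : (0:ℝ) < Real.exp (-π ^ 2 / (2 * τ)) := Real.exp_pos _
  have := mul_le_mul hA (h1.trans h0) hB.le hApos.le
  nlinarith [pi_pos]

lemma one_le_Sq (T : ℝ) (hT : 0 < T) :
    1 ≤ ∑' k : ℤ, (Real.exp (-π ^ 2 / (2 * T))) ^ k.natAbs := by
  have hsum := summable_geom_int (Real.exp_nonneg (-π ^ 2 / (2 * T))) (qlt T hT)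
  have := Summable.le_tsum hsum 0 (fun j _ => by positivity)
  simpa using this

lemma heat_upper (τ T : ℝ) (hτ : 0 < τ) {s : ℝ} (hs1 : τ ≤ s) (hs2 : s ≤ T) (y : ℝ) :
    heatKernelTorus s y ≤
      2 * π * ((Real.sqrt (2 * π * τ))⁻¹ *
        ∑' k : ℤ, (Real.exp (-π ^ 2 / (2 * T))) ^ k.natAbs) := by
  have hs : 0 < s := lt_of_lt_of_le hτ hs1
  have hT : 0 < T := lt_of_lt_of_le hs hs2
  obtain ⟨y', hy', heq⟩ := heat_reduce s y
  rw [heq, heat_eq]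
  have hsum := summable_term_core s hs hy'
  have hgeom := summable_geom_int (Real.exp_nonneg (-π ^ 2 / (2 * T))) (qlt T hT)
  have hsum_le : (∑' k : ℤ, Real.exp (-(y' + 2 * π * k) ^ 2 / (2 * s)))
      ≤ ∑' k : ℤ, (Real.exp (-π ^ 2 / (2 * T))) ^ k.natAbs :=
    Summable.tsum_le_tsum (term_le s T hs hs2 hy') hsum hgeom
  have hA : (Real.sqrt (2 * π * s))⁻¹ ≤ (Real.sqrt (2 * π * τ))⁻¹ := sqrt_inv_bounds hτ hs1
  have hApos : (0:ℝ) < (Real.sqrt (2 * π * s))⁻¹ := by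
    rw [inv_pos]; exact Real.sqrt_pos.mpr (by positivity)
  have hG : (0:ℝ) ≤ ∑' k : ℤ, Real.exp (-(y' + 2 * π * k) ^ 2 / (2 * s)) :=
    tsum_nonneg (fun k => (Real.exp_pos _).le)
  have hkey := mul_le_mul hA hsum_le hG (hApos.le.trans hA)
  nlinarith [pi_pos]

lemma measurable_heat (t : ℝ) (ht : 0 < t) : Measurable (fun y => heatKernelTorus t y) := by
  have hrep : (fun y => heatKernelTorus t y) = fun y =>
      2 * π * ((Real.sqrt (2 * π * t))⁻¹ *
        (∑' k : ℤ, ENNReal.ofReal (Real.exp (-(y + 2 * π * k) ^ 2 / (2 * t)))).toReal) := by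
    funext y
    rw [heat_eq]
    congr 2
    rw [← ENNReal.ofReal_tsum_of_nonneg (fun k => (Real.exp_pos _).le) (summable_term t ht y),
      ENNReal.toReal_ofReal (tsum_nonneg (fun k => (Real.exp_pos _).le))]
  rw [hrep]
  have hm : Measurable fun y =>
      (∑' k : ℤ, ENNReal.ofReal (Real.exp (-(y + 2 * π * k) ^ 2 / (2 * t)))).toReal := by
    apply Measurable.ennreal_toReal
    apply Measurable.ennreal_tsum
    intro k
    apply Measurable.ennreal_ofReal
    exact (Real.continuous_exp.comp (by fun_prop)).measurable
  exact (hm.const_mul _).const_mul _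


/-- The sandwich for `h` at a single space-time point. -/
lemma h_bounds (τ T : ℝ) (hτ : 0 < τ) {m M : ℝ} (hm : 0 < m)
    (hlow : ∀ s, τ ≤ s → s ≤ T → ∀ z, m ≤ heatKernelTorus s z)
    (hupp : ∀ s, τ ≤ s → s ≤ T → ∀ z, heatKernelTorus s z ≤ M)
    (hbar : ℝ → ℝ) (hcont : Continuous hbar)
    {u : ℝ} (hu1 : τ ≤ u) (hu2 : u ≤ T) (x : ℝ) :
    Real.log m + Real.log (∫ y in (-π)..π, Real.exp (hbar y)) ≤
      Real.log (∫ y in (-π)..π, heatKernelTorus u (x - y) * Real.exp (hbar y)) ∧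
    Real.log (∫ y in (-π)..π, heatKernelTorus u (x - y) * Real.exp (hbar y)) ≤
      Real.log M + Real.log (∫ y in (-π)..π, Real.exp (hbar y)) := by
  have hu0 : 0 < u := lt_of_lt_of_le hτ hu1
  have hec : Continuous fun y => Real.exp (hbar y) := Real.continuous_exp.comp hcont
  set I := ∫ y in (-π)..π, Real.exp (hbar y) with hI
  have hIint : IntervalIntegrable (fun y => Real.exp (hbar y)) MeasureTheory.volume (-π) π :=
    hec.intervalIntegrable _ _
  have hIpos : 0 < I :=
    intervalIntegral.intervalIntegral_pos_of_pos hIint (fun z => Real.exp_pos _) (by linarith [pi_pos])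
  set g := fun y => heatKernelTorus u (x - y) * Real.exp (hbar y) with hg
  have hgl : ∀ y, m * Real.exp (hbar y) ≤ g y := fun y =>
    mul_le_mul_of_nonneg_right (hlow u hu1 hu2 (x - y)) (Real.exp_pos _).le
  have hgu : ∀ y, g y ≤ M * Real.exp (hbar y) := fun y =>
    mul_le_mul_of_nonneg_right (hupp u hu1 hu2 (x - y)) (Real.exp_pos _).le
  have hgmeas : Measurable g :=
    ((measurable_heat u hu0).comp (measurable_const.sub measurable_id)).mul hec.measurable
  have hMint : IntervalIntegrable (fun y => M * Real.exp (hbar y)) MeasureTheory.volume (-π) π :=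
    (continuous_const.mul hec).intervalIntegrable _ _
  have hmint : IntervalIntegrable (fun y => m * Real.exp (hbar y)) MeasureTheory.volume (-π) π :=
    (continuous_const.mul hec).intervalIntegrable _ _
  have hgint : IntervalIntegrable g MeasureTheory.volume (-π) π := by
    rw [intervalIntegrable_iff]
    apply MeasureTheory.Integrable.mono'
      (g := fun y => M * Real.exp (hbar y)) ?_ hgmeas.aestronglyMeasurable ?_
    · rw [intervalIntegrable_iff] at hMint; exact hMint
    · apply MeasureTheory.ae_of_all
      intro z
      have h1 : 0 ≤ g z := le_trans (by positivity) (hgl z)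
      rw [Real.norm_eq_abs, abs_of_nonneg h1]
      exact hgu z
  have hπ : (-π : ℝ) ≤ π := by linarith [pi_pos]
  have hlowI : m * I ≤ ∫ y in (-π)..π, g y := by
    have := intervalIntegral.integral_mono_on hπ hmint hgint (fun z _ => hgl z)
    rwa [intervalIntegral.integral_const_mul] at this
  have huppI : (∫ y in (-π)..π, g y) ≤ M * I := by
    have := intervalIntegral.integral_mono_on hπ hgint hMint (fun z _ => hgu z)
    rwa [intervalIntegral.integral_const_mul] at this
  have hwpos : 0 < ∫ y in (-π)..π, g y := lt_of_lt_of_le (by positivity) hlowI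
  have hMpos : 0 < M := lt_of_lt_of_le hm
    (le_trans (hlow u hu1 hu2 0) (hupp u hu1 hu2 0))
  constructor
  · rw [← Real.log_mul hm.ne' hIpos.ne']
    exact (Real.log_le_log_iff (by positivity) hwpos).mpr hlowI
  · rw [← Real.log_mul hMpos.ne' hIpos.ne']
    exact (Real.log_le_log_iff hwpos (by positivity)).mpr huppI

end KPZAux

/-- **Space-time oscillation bound for KPZ without forcing.** For all `0 < τ < T`
there is `C = C(τ,T) > 0`, independent of the initial condition, such that for every
continuous `2π`-periodic `h̄`, the Cole–Hopf solution
`h(t,x) = log ∫_{−π}^{π} p_𝕋(t,x−y) e^{h̄(y)} dy` satisfies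
`|h(t,x) − h(s,y)| ≤ C` whenever `τ ≤ s ≤ t ≤ T` and `x, y ∈ ℝ`. -/
theorem kpz_no_forcing_spacetime_oscillation (τ T : ℝ) (hτ : 0 < τ) (hτT : τ < T) :
    ∃ C : ℝ, 0 < C ∧
      ∀ hbar : ℝ → ℝ, Continuous hbar → Function.Periodic hbar (2 * π) →
      ∀ h : ℝ → ℝ → ℝ,
        (∀ t x, h t x =
          Real.log (∫ y in (-π)..π, heatKernelTorus t (x - y) * Real.exp (hbar y))) →
      ∀ s t : ℝ, τ ≤ s → s ≤ t → t ≤ T → ∀ x y : ℝ,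
        |h t x - h s y| ≤ C := by
  have hT : 0 < T := hτ.trans hτT
  set m : ℝ := 2 * π * ((Real.sqrt (2 * π * T))⁻¹ * Real.exp (-π ^ 2 / (2 * τ))) with hm_def
  set M : ℝ := 2 * π * ((Real.sqrt (2 * π * τ))⁻¹ *
    ∑' k : ℤ, (Real.exp (-π ^ 2 / (2 * T))) ^ k.natAbs) with hM_def
  have hmpos : 0 < m := by
    have : 0 < Real.sqrt (2 * π * T) := Real.sqrt_pos.mpr (by positivity)
    rw [hm_def]; positivity
  have hlow : ∀ s, τ ≤ s → s ≤ T → ∀ z, m ≤ heatKernelTorus s z :=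
    fun s hs1 hs2 z => KPZAux.heat_lower τ T hτ hs1 hs2 z
  have hupp : ∀ s, τ ≤ s → s ≤ T → ∀ z, heatKernelTorus s z ≤ M :=
    fun s hs1 hs2 z => KPZAux.heat_upper τ T hτ hs1 hs2 z
  have hmM : m ≤ M := le_trans (hlow τ le_rfl hτT.le 0) (hupp τ le_rfl hτT.le 0)
  refine ⟨Real.log M - Real.log m + 1, ?_, ?_⟩
  · have : Real.log m ≤ Real.log M := (Real.log_le_log_iff hmpos (hmpos.trans_le hmM)).mpr hmM
    linarith
  intro hbar hcont _hper h hdef s t hτs hst htT x y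
  have h1 := KPZAux.h_bounds τ T hτ hmpos hlow hupp hbar hcont (hτs.trans hst) htT x
  have h2 := KPZAux.h_bounds τ T hτ hmpos hlow hupp hbar hcont hτs (hst.trans htT) y
  rw [← hdef t x] at h1
  rw [← hdef s y] at h2
  rw [abs_le]
  constructor <;> [linarith [h1.1, h2.2]; linarith [h1.2, h2.1]]
end
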